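/- arXiv:1603.00336 — 14 statements merged into one kernel-verified Lean document; each statement's English description precedes it below -/
import Mathlib

section
/- Let V be a Hilbert space, V_r ⊆ V a closed subspace, u ∈ V, and let u_r^⊥ be the orthogonal projection of u onto V_r. If u_r ∈ V_r satisfies ‖u_r^⊥ − u_r‖_V ≤ δ ‖u − u_r‖_V for some δ ∈ [0,1), then ‖u − u_r‖_V ≤ (1 − δ²)^{-1/2} ‖u − u_r^⊥‖_V. -/
noncomputable section
open InnerProductSpace
open scoped RealInnerProductSpace

theorem stmt_1 {V : Type*}
    [NormedAddCommGroup V] [InnerProductSpace ℝ V] [CompleteSpace V]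
    (Vr : Submodule ℝ V) [CompleteSpace Vr]
    (u ur : V) (hur : ur ∈ Vr) (δ : ℝ) (hδ0 : 0 ≤ δ) (hδ1 : δ < 1)
    (h : ‖(Submodule.orthogonalProjectionOnto Vr u : V) - ur‖ ≤ δ * ‖u - ur‖) :
    ‖u - ur‖ ≤ (Real.sqrt (1 - δ ^ 2))⁻¹ * ‖u - (Submodule.orthogonalProjectionOnto Vr u : V)‖ := by
  set p : V := (Submodule.orthogonalProjectionOnto Vr u : V)
  have horth : ⟪u - p, p - ur⟫_ℝ = 0 := by
    have hmem : p - ur ∈ Vr := Vr.sub_mem (Submodule.orthogonalProjectionOnto Vr u).2 hur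
    rw [real_inner_comm]
    exact (Vr.mem_orthogonal _).1 (Vr.sub_starProjection_mem_orthogonal u) _ hmem
  have hpyth : ‖u - ur‖ ^ 2 = ‖u - p‖ ^ 2 + ‖p - ur‖ ^ 2 := by
    have := norm_add_sq_real (u - p) (p - ur)
    rw [horth] at this
    simpa using this
  have hkey : (1 - δ ^ 2) * ‖u - ur‖ ^ 2 ≤ ‖u - p‖ ^ 2 := by
    nlinarith [norm_nonneg (p - ur), norm_nonneg (u - ur), sq_nonneg δ]
  have h1 : 0 < 1 - δ ^ 2 := by nlinarith
  have hs : 0 < Real.sqrt (1 - δ ^ 2) := Real.sqrt_pos.2 h1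
  rw [inv_mul_eq_div, le_div_iff₀ hs]
  have hsq : (‖u - ur‖ * Real.sqrt (1 - δ ^ 2)) ^ 2 ≤ ‖u - p‖ ^ 2 := by
    rw [mul_pow, Real.sq_sqrt h1.le]
    nlinarith
  have := Real.sqrt_le_sqrt hsq
  rwa [Real.sqrt_sq (by positivity), Real.sqrt_sq (norm_nonneg _)] at this
end
end

section
/- Let V, W be Hilbert spaces, A ∈ L(V, W') a norm-isomorphism, b ∈ W', u = A⁻¹ b, V_r ⊆ V and W_r ⊆ W finite-dimensional subspaces with the discrete inf-sup constant α_{V_r,W_r} := inf_{0≠v∈V_r} sup_{0≠y∈W_r} ⟨Av, y⟩/(‖v‖_V ‖y‖_W) > 0. Let u_r ∈ V_r be the Petrov-Galerkin solution satisfying ⟨A u_r − b, y⟩ = 0 for all y ∈ W_r. Then ‖u − u_r‖_V ≤ (1 − δ²)^{-1/2} · inf_{v∈V_r} ‖u − v‖_V, where δ = sup_{0≠v∈V_r} inf_{y∈W_r} ‖v − R_V⁻¹ A* y‖_V / ‖v‖_V satisfies δ < 1. -/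
noncomputable section
open InnerProductSpace
open scoped RealInnerProductSpace

set_option maxHeartbeats 1600000 in
theorem stmt_2 {V W : Type*}
    [NormedAddCommGroup V] [InnerProductSpace ℝ V] [CompleteSpace V]
    [NormedAddCommGroup W] [InnerProductSpace ℝ W] [CompleteSpace W]
    (A : V →L[ℝ] StrongDual ℝ W) (hA : Function.Bijective A)
    (b : StrongDual ℝ W) (u : V) (hu : A u = b)
    (Vr : Submodule ℝ V) (Wr : Submodule ℝ W)
    [FiniteDimensional ℝ Vr] [FiniteDimensional ℝ Wr]
    (α : ℝ)
    (hαdef : α = ⨅ v : {v : Vr // (v : V) ≠ 0}, ⨆ y : {y : Wr // (y : W) ≠ 0},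
        A (v.1 : V) (y.1 : W) / (‖(v.1 : V)‖ * ‖(y.1 : W)‖))
    (hα : 0 < α)
    (ur : V) (hurm : ur ∈ Vr) (hPG : ∀ y ∈ Wr, A ur y = b y)
    (δ : ℝ)
    (hδ : δ = ⨆ v : {v : Vr // (v : V) ≠ 0}, ⨅ y : Wr,
        ‖(v.1 : V) - (toDual ℝ V).symm (A.flip (y : W))‖ / ‖(v.1 : V)‖) :
    δ < 1 ∧ ‖u - ur‖ ≤ (Real.sqrt (1 - δ ^ 2))⁻¹ * ⨅ v : Vr, ‖u - (v : V)‖ := by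
  classical
  let T : Wr → V := fun y => (toDual ℝ V).symm (A.flip (y : W))
  have hδ' : δ = ⨆ v : {v : Vr // (v : V) ≠ 0}, ⨅ y : Wr,
      ‖(v.1 : V) - T y‖ / ‖(v.1 : V)‖ := hδ
  have hT0 : T 0 = 0 := by simp [T]
  have hTip : ∀ (x : V) (y : Wr), ⟪x, T y⟫_ℝ = A x (y : W) := by
    intro x y
    rw [real_inner_comm]
    simp only [T, toDual_symm_apply, ContinuousLinearMap.flip_apply]
  have hTsmul : ∀ (t : ℝ) (y : Wr), T (t • y) = t • T y := by
    intro t y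
    simp [T]
  have hTnorm : ∀ y : Wr, ‖T y‖ ≤ ‖A‖ * ‖(y : W)‖ := by
    intro y
    have h1 : ‖T y‖ = ‖A.flip (y : W)‖ := LinearIsometryEquiv.norm_map _ _
    rw [h1]
    calc ‖A.flip (y : W)‖ ≤ ‖A.flip‖ * ‖(y : W)‖ := A.flip.le_opNorm _
      _ = ‖A‖ * ‖(y : W)‖ := by rw [ContinuousLinearMap.opNorm_flip]
  have habs : ∀ (x : V) (y : W), |A x y| ≤ ‖A‖ * ‖x‖ * ‖y‖ := by
    intro x y
    have := A.le_opNorm₂ x y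
    rwa [Real.norm_eq_abs] at this
  -- the index type of the sup is nonempty
  have hVne : Nonempty {v : Vr // (v : V) ≠ 0} := by
    by_contra h
    rw [not_nonempty_iff] at h
    rw [hαdef, Real.iInf_of_isEmpty] at hα
    exact lt_irrefl 0 hα
  -- the range defining δ is bounded above by 1
  have hbddδ : BddAbove (Set.range fun v : {v : Vr // (v : V) ≠ 0} =>
      ⨅ y : Wr, ‖(v.1 : V) - T y‖ / ‖(v.1 : V)‖) := by
    refine ⟨1, ?_⟩
    rintro x ⟨v, rfl⟩
    have hv0 : (0:ℝ) < ‖(v.1 : V)‖ := norm_pos_iff.mpr v.2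
    calc (⨅ y : Wr, ‖(v.1 : V) - T y‖ / ‖(v.1 : V)‖)
        ≤ ‖(v.1 : V) - T 0‖ / ‖(v.1 : V)‖ := by
          refine ciInf_le ⟨0, ?_⟩ 0
          rintro x ⟨y, rfl⟩
          positivity
      _ = 1 := by rw [hT0, sub_zero, div_self (ne_of_gt hv0)]
  have hδ0 : 0 ≤ δ := by
    rw [hδ']
    exact Real.iSup_nonneg fun v => Real.iInf_nonneg fun y => by positivity
  haveI := hVne
  -- ‖A‖ > 0
  obtain ⟨v0⟩ := id hVne
  have hA0 : (0:ℝ) < ‖A‖ := by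
    have h1 : A (v0.1 : V) ≠ 0 := by
      intro h
      exact v0.2 (hA.1 (by rw [h, map_zero]))
    have h2 := A.le_opNorm (v0.1 : V)
    have h3 : 0 < ‖A (v0.1 : V)‖ := norm_pos_iff.mpr h1
    nlinarith [norm_nonneg (v0.1 : V)]
  set c : ℝ := α / (2 * ‖A‖) with hc
  have hc0 : 0 < c := by positivity
  -- key step for δ < 1
  have hstep : ∀ v : {v : Vr // (v : V) ≠ 0},
      (⨅ y : Wr, ‖(v.1 : V) - T y‖ / ‖(v.1 : V)‖) ≤ Real.sqrt (1 - c ^ 2) := by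
    intro v
    have hv0 : (0:ℝ) < ‖(v.1 : V)‖ := norm_pos_iff.mpr v.2
    -- α is at most the inner sup for this v
    have hbb : BddBelow (Set.range fun v : {v : Vr // (v : V) ≠ 0} =>
        ⨆ y : {y : Wr // (y : W) ≠ 0},
          A (v.1 : V) (y.1 : W) / (‖(v.1 : V)‖ * ‖(y.1 : W)‖)) := by
      refine ⟨-‖A‖, ?_⟩
      rintro x ⟨w, rfl⟩
      beta_reduce
      by_cases hW : Nonempty {y : Wr // (y : W) ≠ 0}
      · obtain ⟨y0⟩ := hW
        have hwp : 0 < ‖(w.1 : V)‖ := norm_pos_iff.mpr w.2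
        refine le_trans ?_ (le_ciSup ⟨‖A‖, ?_⟩ y0)
        · have hyp : 0 < ‖(y0.1 : W)‖ := norm_pos_iff.mpr y0.2
          rw [le_div_iff₀ (by positivity)]
          have h := abs_le.mp (habs (w.1 : V) (y0.1 : W))
          rw [neg_mul, ← mul_assoc]
          exact h.1
        · rintro x ⟨y, rfl⟩
          have hyp : 0 < ‖(y.1 : W)‖ := norm_pos_iff.mpr y.2
          rw [div_le_iff₀ (by positivity)]
          have h := abs_le.mp (habs (w.1 : V) (y.1 : W))
          rw [← mul_assoc]
          exact h.2
      · rw [not_nonempty_iff] at hW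
        haveI := hW
        rw [Real.iSup_of_isEmpty]
        linarith
    have hαle : α ≤ ⨆ y : {y : Wr // (y : W) ≠ 0},
        A (v.1 : V) (y.1 : W) / (‖(v.1 : V)‖ * ‖(y.1 : W)‖) := by
      rw [hαdef]; exact ciInf_le hbb v
    have hWne : Nonempty {y : Wr // (y : W) ≠ 0} := by
      by_contra hW
      rw [not_nonempty_iff] at hW
      haveI := hW
      rw [Real.iSup_of_isEmpty] at hαle
      linarith
    haveI := hWne
    obtain ⟨y, hy⟩ := exists_lt_of_lt_ciSup (lt_of_lt_of_le (by linarith : α / 2 < α) hαle)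
    have hyp : 0 < ‖(y.1 : W)‖ := norm_pos_iff.mpr y.2
    set s : V := T y.1 with hs
    have hips : ⟪(v.1 : V), s⟫_ℝ = A (v.1 : V) (y.1 : W) := hTip _ _
    have hAvy : α / 2 * (‖(v.1 : V)‖ * ‖(y.1 : W)‖) < A (v.1 : V) (y.1 : W) := by
      rw [lt_div_iff₀ (by positivity)] at hy
      linarith
    have hpos : 0 < α / 2 * (‖(v.1 : V)‖ * ‖(y.1 : W)‖) := by positivity
    have hvs0 : 0 < ⟪(v.1 : V), s⟫_ℝ := by
      rw [hips]; linarith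
    have hs0 : s ≠ 0 := by
      intro h
      rw [h, inner_zero_right] at hvs0
      exact lt_irrefl 0 hvs0
    have hsn : 0 < ‖s‖ := norm_pos_iff.mpr hs0
    set t : ℝ := ⟪(v.1 : V), s⟫_ℝ / ‖s‖ ^ 2 with ht
    have hexp : ‖(v.1 : V) - t • s‖ ^ 2
        = ‖(v.1 : V)‖ ^ 2 - ⟪(v.1 : V), s⟫_ℝ ^ 2 / ‖s‖ ^ 2 := by
      rw [norm_sub_sq_real, real_inner_smul_right, norm_smul, mul_pow,
        Real.norm_eq_abs, sq_abs, ht]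
      field_simp
      ring
    have hsle : ‖s‖ ≤ ‖A‖ * ‖(y.1 : W)‖ := hTnorm y.1
    have harg : ‖(v.1 : V)‖ ^ 2 - ⟪(v.1 : V), s⟫_ℝ ^ 2 / ‖s‖ ^ 2
        ≤ (1 - c ^ 2) * ‖(v.1 : V)‖ ^ 2 := by
      have h1 : (α / 2) ^ 2 * (‖(v.1 : V)‖ ^ 2 * ‖(y.1 : W)‖ ^ 2)
          ≤ ⟪(v.1 : V), s⟫_ℝ ^ 2 := by
        rw [hips]; nlinarith [hAvy, hpos]
      have h2 : ‖s‖ ^ 2 ≤ ‖A‖ ^ 2 * ‖(y.1 : W)‖ ^ 2 := by nlinarith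
      have hc2 : c ^ 2 * ‖A‖ ^ 2 = (α / 2) ^ 2 := by
        rw [hc]; field_simp
      have h3 : c ^ 2 * ‖(v.1 : V)‖ ^ 2 ≤ ⟪(v.1 : V), s⟫_ℝ ^ 2 / ‖s‖ ^ 2 := by
        rw [le_div_iff₀ (by positivity)]
        calc c ^ 2 * ‖(v.1 : V)‖ ^ 2 * ‖s‖ ^ 2
            ≤ c ^ 2 * ‖(v.1 : V)‖ ^ 2 * (‖A‖ ^ 2 * ‖(y.1 : W)‖ ^ 2) :=
              mul_le_mul_of_nonneg_left h2 (by positivity)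
          _ = (α / 2) ^ 2 * (‖(v.1 : V)‖ ^ 2 * ‖(y.1 : W)‖ ^ 2) := by
              rw [← hc2]; ring
          _ ≤ ⟪(v.1 : V), s⟫_ℝ ^ 2 := h1
      linarith
    have hnn : (0:ℝ) ≤ 1 - c ^ 2 := by
      have hCS := abs_real_inner_le_norm (v.1 : V) s
      have h4 : (0:ℝ) ≤ ‖(v.1 : V)‖ ^ 2 - ⟪(v.1 : V), s⟫_ℝ ^ 2 / ‖s‖ ^ 2 := by
        rw [sub_nonneg, div_le_iff₀ (by positivity)]
        obtain ⟨hl, hr⟩ := abs_le.mp hCS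
        nlinarith [hl, hr]
      by_contra hcon
      push_neg at hcon
      have hneg : (1 - c ^ 2) * ‖(v.1 : V)‖ ^ 2 < 0 :=
        mul_neg_of_neg_of_pos (by linarith) (by positivity)
      linarith
    calc (⨅ y' : Wr, ‖(v.1 : V) - T y'‖ / ‖(v.1 : V)‖)
        ≤ ‖(v.1 : V) - T (t • y.1)‖ / ‖(v.1 : V)‖ := by
          refine ciInf_le ⟨0, ?_⟩ (t • y.1)
          rintro x ⟨y', rfl⟩
          positivity
      _ ≤ Real.sqrt (1 - c ^ 2) := by
          rw [hTsmul, ← hs, div_le_iff₀ hv0]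
          have h5 : ‖(v.1 : V) - t • s‖ = Real.sqrt (‖(v.1 : V) - t • s‖ ^ 2) :=
            (Real.sqrt_sq (norm_nonneg _)).symm
          rw [h5, hexp]
          calc Real.sqrt (‖(v.1 : V)‖ ^ 2 - ⟪(v.1 : V), s⟫_ℝ ^ 2 / ‖s‖ ^ 2)
              ≤ Real.sqrt ((1 - c ^ 2) * ‖(v.1 : V)‖ ^ 2) := Real.sqrt_le_sqrt harg
            _ = Real.sqrt (1 - c ^ 2) * ‖(v.1 : V)‖ := by
                rw [Real.sqrt_mul hnn, Real.sqrt_sq (norm_nonneg _)]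
  have hδle : δ ≤ Real.sqrt (1 - c ^ 2) := by
    rw [hδ']
    exact ciSup_le hstep
  have hδ1 : δ < 1 := lt_of_le_of_lt hδle ((Real.sqrt_lt' one_pos).mpr (by nlinarith))
  -- main estimate
  have hmain : ∀ v : Vr, Real.sqrt (1 - δ ^ 2) * ‖u - ur‖ ≤ ‖u - (v : V)‖ := by
    intro v
    have horth : ∀ y : Wr, ⟪u - ur, T y⟫_ℝ = 0 := by
      intro y
      rw [hTip]
      have h1 : A (u - ur) (y : W) = A u (y : W) - A ur (y : W) := by
        rw [map_sub]; rfl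
      rw [h1, hu, hPG (y : W) y.2, sub_self]
    set w : V := ur - (v : V) with hw
    have hinner : -(δ * ‖u - ur‖ * ‖w‖) ≤ ⟪u - ur, w⟫_ℝ := by
      by_cases he : u - ur = 0
      · simp [he]
      by_cases hw0 : w = 0
      · simp [hw0]
      · have hep : 0 < ‖u - ur‖ := norm_pos_iff.mpr he
        have hwp : 0 < ‖w‖ := norm_pos_iff.mpr hw0
        have hwVr : w ∈ Vr := Submodule.sub_mem _ hurm v.2
        have hkey : -⟪u - ur, w⟫_ℝ / (‖u - ur‖ * ‖w‖) ≤ δ := by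
          rw [hδ']
          refine le_trans ?_ (le_ciSup hbddδ ⟨⟨w, hwVr⟩, hw0⟩)
          refine le_ciInf fun y => ?_
          rw [div_le_div_iff₀ (by positivity) hwp]
          have h1 : ⟪u - ur, w - T y⟫_ℝ = ⟪u - ur, w⟫_ℝ := by
            rw [inner_sub_right, horth y, sub_zero]
          have h2 := abs_real_inner_le_norm (u - ur) (w - T y)
          rw [h1] at h2
          have h3 := abs_le.mp h2
          nlinarith [h3.1]
        rw [div_le_iff₀ (by positivity)] at hkey
        linarith
    have hsum : u - (v : V) = (u - ur) + w := by rw [hw]; abel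
    have hns : (1 - δ ^ 2) * ‖u - ur‖ ^ 2 ≤ ‖u - (v : V)‖ ^ 2 := by
      rw [hsum, norm_add_sq_real]
      nlinarith [hinner, sq_nonneg (‖w‖ - δ * ‖u - ur‖), norm_nonneg w,
        norm_nonneg (u - ur)]
    calc Real.sqrt (1 - δ ^ 2) * ‖u - ur‖
        = Real.sqrt ((1 - δ ^ 2) * ‖u - ur‖ ^ 2) := by
          rw [Real.sqrt_mul (by nlinarith : (0:ℝ) ≤ 1 - δ ^ 2),
            Real.sqrt_sq (norm_nonneg _)]
      _ ≤ Real.sqrt (‖u - (v : V)‖ ^ 2) := Real.sqrt_le_sqrt hns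
      _ = ‖u - (v : V)‖ := Real.sqrt_sq (norm_nonneg _)
  refine ⟨hδ1, ?_⟩
  have hsq : 0 < Real.sqrt (1 - δ ^ 2) := Real.sqrt_pos.mpr (by nlinarith)
  haveI : Nonempty Vr := ⟨0⟩
  have hinf : Real.sqrt (1 - δ ^ 2) * ‖u - ur‖ ≤ ⨅ v : Vr, ‖u - (v : V)‖ :=
    le_ciInf hmain
  calc ‖u - ur‖
      = (Real.sqrt (1 - δ ^ 2))⁻¹ * (Real.sqrt (1 - δ ^ 2) * ‖u - ur‖) := by
        field_simp
    _ ≤ (Real.sqrt (1 - δ ^ 2))⁻¹ * ⨅ v : Vr, ‖u - (v : V)‖ :=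
        mul_le_mul_of_nonneg_left hinf (by positivity)
end
end

section
/- Under the assumptions of the Petrov-Galerkin projection (A norm-isomorphism, discrete inf-sup condition α_{V_r,W_r} > 0, u_r the Petrov-Galerkin projection of u = A⁻¹b onto V_r with test space W_r), for a bounded linear operator L ∈ L(V, Z) with Z a Hilbert space, the variable of interest s = Lu satisfies ‖s − L u_r‖_Z ≤ δ^L_{W_r} · (1 − δ_{V_r,W_r}²)^{-1/2} · inf_{v∈V_r} ‖u − v‖_V, where δ^L_{W_r} = sup_{0≠z'∈Z'} inf_{y∈W_r} ‖L* z' − A* y‖_{V'} / ‖z'‖_{Z'}. -/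
noncomputable section
open InnerProductSpace
open scoped RealInnerProductSpace
set_option maxHeartbeats 2000000

theorem stmt_3 {V W Z : Type*}
    [NormedAddCommGroup V] [InnerProductSpace ℝ V] [CompleteSpace V]
    [NormedAddCommGroup W] [InnerProductSpace ℝ W] [CompleteSpace W]
    [NormedAddCommGroup Z] [InnerProductSpace ℝ Z] [CompleteSpace Z]
    (A : V →L[ℝ] StrongDual ℝ W) (hA : Function.Bijective A)
    (b : StrongDual ℝ W) (u : V) (hu : A u = b)
    (L : V →L[ℝ] Z)
    (Vr : Submodule ℝ V) (Wr : Submodule ℝ W)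
    [FiniteDimensional ℝ Vr] [FiniteDimensional ℝ Wr]
    (α : ℝ)
    (hαdef : α = ⨅ v : {v : Vr // (v : V) ≠ 0}, ⨆ y : {y : Wr // (y : W) ≠ 0},
        A (v.1 : V) (y.1 : W) / (‖(v.1 : V)‖ * ‖(y.1 : W)‖))
    (hα : 0 < α)
    (ur : V) (hurm : ur ∈ Vr) (hPG : ∀ y ∈ Wr, A ur y = b y)
    (δ : ℝ)
    (hδ : δ = ⨆ v : {v : Vr // (v : V) ≠ 0}, ⨅ y : Wr,
        ‖(v.1 : V) - (toDual ℝ V).symm (A.flip (y : W))‖ / ‖(v.1 : V)‖)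
    (δL : ℝ)
    (hδL : δL = ⨆ z' : {z' : StrongDual ℝ Z // z' ≠ 0}, ⨅ y : Wr,
        ‖(z'.1).comp L - A.flip (y : W)‖ / ‖z'.1‖) :
    ‖L u - L ur‖ ≤ δL * (Real.sqrt (1 - δ ^ 2))⁻¹ * ⨅ v : Vr, ‖u - (v : V)‖ := by
  classical
  -- the operator T = R_V⁻¹ ∘ A*
  set Tl : W →ₗ[ℝ] V :=
    ((toDual ℝ V).symm.toLinearEquiv.toLinearMap).comp (A.flip.toLinearMap) with hTl
  have hTl_apply : ∀ y : W, Tl y = (toDual ℝ V).symm (A.flip y) := fun y => rfl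
  have hT_inner : ∀ (y : W) (x : V), ⟪Tl y, x⟫_ℝ = A x y := by
    intro y x
    rw [hTl_apply, toDual_symm_apply]
    rfl
  have hT_norm : ∀ y : W, ‖Tl y‖ ≤ ‖A‖ * ‖y‖ := by
    intro y
    rw [hTl_apply]
    rw [LinearIsometryEquiv.norm_map]
    calc ‖A.flip y‖ ≤ ‖A.flip‖ * ‖y‖ := (A.flip).le_opNorm y
    _ = ‖A‖ * ‖y‖ := by rw [ContinuousLinearMap.opNorm_flip]
  set M : Submodule ℝ V := Wr.map Tl with hM
  haveI : Module.Finite ℝ M := Module.Finite.map Wr Tl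
  set e : V := u - ur with he
  -- Galerkin orthogonality
  have hGal : ∀ y ∈ Wr, A e y = 0 := by
    intro y hy
    have : A e = A u - A ur := by rw [he, map_sub]
    rw [this, ContinuousLinearMap.sub_apply, hu, hPG y hy, sub_self]
  have he_orth : ∀ m ∈ M, ⟪e, m⟫_ℝ = 0 := by
    intro m hm
    obtain ⟨y, hy, rfl⟩ := hm
    rw [real_inner_comm, hT_inner]
    exact hGal y hy
  -- non-triviality of Vr and Wr
  haveI hVne : Nonempty {v : Vr // (v : V) ≠ 0} := by
    by_contra h
    rw [not_nonempty_iff] at h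
    rw [hαdef, Real.iInf_of_isEmpty] at hα
    exact lt_irrefl 0 hα
  haveI hWne : Nonempty {y : Wr // (y : W) ≠ 0} := by
    by_contra h
    rw [not_nonempty_iff] at h
    rw [hαdef] at hα
    simp only [Real.iSup_of_isEmpty] at hα
    rw [ciInf_const] at hα
    exact lt_irrefl 0 hα
  have hA_pos : 0 < ‖A‖ := by
    obtain ⟨⟨x, hx⟩⟩ := hVne
    have h1 : A (x : V) ≠ 0 := fun h => hx (by simpa using hA.1 (a₁ := (x:V)) (a₂ := 0) (by simpa using h))
    have h2 : 0 < ‖A (x : V)‖ := norm_pos_iff.mpr h1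
    have h3 : ‖A (x : V)‖ ≤ ‖A‖ * ‖(x : V)‖ := A.le_opNorm _
    nlinarith [norm_nonneg (x : V)]
  -- orthogonal projection onto M
  set P : V → V := fun x => (M.orthogonalProjectionOnto x : V) with hP
  have hPmem : ∀ x : V, P x ∈ M := fun x => (M.orthogonalProjectionOnto x).2
  have hPorth : ∀ x : V, x - P x ∈ Mᗮ := fun x => M.sub_starProjection_mem_orthogonal x
  have hPmin : ∀ (x : V), ∀ m ∈ M, ‖x - P x‖ ≤ ‖x - m‖ := by
    intro x m hm
    have horth : ⟪x - P x, P x - m⟫_ℝ = 0 := by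
      rw [real_inner_comm]; exact (hPorth x) _ (M.sub_mem (hPmem x) hm)
    have hexp : x - m = (x - P x) + (P x - m) := by abel
    have hsq := norm_add_sq_real (x - P x) (P x - m)
    rw [← hexp, horth] at hsq
    have h2 : ‖x - P x‖ ^ 2 ≤ ‖x - m‖ ^ 2 := by nlinarith [sq_nonneg ‖P x - m‖]
    have h3 := Real.sqrt_le_sqrt h2
    rwa [Real.sqrt_sq (norm_nonneg _), Real.sqrt_sq (norm_nonneg _)] at h3
  have hP_le : ∀ x : V, ‖P x‖ ≤ ‖x‖ ∧ ‖x - P x‖ ^ 2 = ‖x‖ ^ 2 - ‖P x‖ ^ 2 := by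
    intro x
    have horth : ⟪x - P x, P x⟫_ℝ = 0 := by
      rw [real_inner_comm]; exact (hPorth x) _ (hPmem x)
    have hexp : x = (x - P x) + P x := by abel
    have hsq := norm_add_sq_real (x - P x) (P x)
    rw [← hexp, horth] at hsq
    constructor
    · nlinarith [norm_nonneg x, norm_nonneg (P x), sq_nonneg (‖x - P x‖)]
    · nlinarith
  -- δ is a sup of nonneg terms, bounded by 1
  have hδinner_bdd : ∀ v : {v : Vr // (v : V) ≠ 0}, BddBelow (Set.range fun y : Wr =>
      ‖(v.1 : V) - (toDual ℝ V).symm (A.flip (y : W))‖ / ‖(v.1 : V)‖) := by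
    intro v
    exact ⟨0, by rintro r ⟨y, rfl⟩; exact div_nonneg (norm_nonneg _) (norm_nonneg _)⟩
  have hδfam_bdd : BddAbove (Set.range fun v : {v : Vr // (v : V) ≠ 0} =>
      ⨅ y : Wr, ‖(v.1 : V) - (toDual ℝ V).symm (A.flip (y : W))‖ / ‖(v.1 : V)‖) := by
    refine ⟨1, ?_⟩
    rintro r ⟨v, rfl⟩
    have h0 : (⨅ y : Wr, ‖(v.1 : V) - (toDual ℝ V).symm (A.flip (y : W))‖ / ‖(v.1 : V)‖)
        ≤ ‖(v.1 : V) - (toDual ℝ V).symm (A.flip ((0 : Wr) : W))‖ / ‖(v.1 : V)‖ :=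
      ciInf_le (hδinner_bdd v) 0
    have hx : (0:ℝ) < ‖(v.1 : V)‖ := norm_pos_iff.mpr v.2
    rw [Submodule.coe_zero, map_zero, map_zero, sub_zero, div_self hx.ne'] at h0
    exact h0
  have hδ0 : 0 ≤ δ := hδ ▸ Real.iSup_nonneg fun v =>
    Real.iInf_nonneg fun y => div_nonneg (norm_nonneg _) (norm_nonneg _)
  -- for x in Vr, ‖x - P x‖ ≤ δ ‖x‖
  have hprojδ : ∀ x ∈ Vr, ‖x - P x‖ ≤ δ * ‖x‖ := by
    intro x hx
    by_cases hx0 : x = 0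
    · simp only [hx0, norm_zero, mul_zero]
      have : P (0:V) = 0 := by
        simp only [hP, map_zero, ZeroMemClass.coe_zero]
      rw [this, sub_zero, norm_zero]
    · have hxn : (0:ℝ) < ‖x‖ := norm_pos_iff.mpr hx0
      set vv : {v : Vr // (v : V) ≠ 0} := ⟨⟨x, hx⟩, hx0⟩ with hvv
      have h1 : ‖x - P x‖ / ‖x‖ ≤ ⨅ y : Wr,
          ‖(vv.1 : V) - (toDual ℝ V).symm (A.flip (y : W))‖ / ‖(vv.1 : V)‖ := by
        apply le_ciInf
        intro y
        have hmem : (toDual ℝ V).symm (A.flip (y : W)) ∈ M := ⟨(y : W), y.2, rfl⟩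
        have := hPmin x _ hmem
        gcongr
      have h2 : (⨅ y : Wr, ‖(vv.1 : V) - (toDual ℝ V).symm (A.flip (y : W))‖ / ‖(vv.1 : V)‖)
          ≤ δ := hδ ▸ le_ciSup hδfam_bdd vv
      have h3 : ‖x - P x‖ / ‖x‖ ≤ δ := h1.trans h2
      rw [div_le_iff₀ hxn] at h3
      linarith [h3]
  -- inf-sup implies lower bound on projection
  have hkey : ∀ x : V, x ∈ Vr → x ≠ 0 → α * ‖x‖ ≤ ‖A‖ * ‖P x‖ := by
    intro x hx hx0
    have hxn : (0:ℝ) < ‖x‖ := norm_pos_iff.mpr hx0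
    set vv : {v : Vr // (v : V) ≠ 0} := ⟨⟨x, hx⟩, hx0⟩ with hvv
    -- each inner sup is bounded above by ‖A‖ and nonneg
    have hinner_bdd : ∀ v : {v : Vr // (v : V) ≠ 0}, BddAbove (Set.range
        fun y : {y : Wr // (y : W) ≠ 0} =>
          A (v.1 : V) (y.1 : W) / (‖(v.1 : V)‖ * ‖(y.1 : W)‖)) := by
      intro v
      refine ⟨‖A‖, ?_⟩
      rintro r ⟨y, rfl⟩
      have hden : (0:ℝ) < ‖(v.1 : V)‖ * ‖(y.1 : W)‖ :=
        mul_pos (norm_pos_iff.mpr v.2) (norm_pos_iff.mpr y.2)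
      rw [div_le_iff₀ hden]
      calc A (v.1 : V) (y.1 : W) ≤ ‖A (v.1 : V) (y.1 : W)‖ := le_abs_self _
      _ ≤ ‖A (v.1 : V)‖ * ‖(y.1 : W)‖ := (A (v.1 : V)).le_opNorm _
      _ ≤ (‖A‖ * ‖(v.1 : V)‖) * ‖(y.1 : W)‖ := by
          have := A.le_opNorm (v.1 : V)
          nlinarith [norm_nonneg (y.1 : W)]
      _ = ‖A‖ * (‖(v.1 : V)‖ * ‖(y.1 : W)‖) := by ring
    have houter_bdd : BddBelow (Set.range fun v : {v : Vr // (v : V) ≠ 0} =>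
        ⨆ y : {y : Wr // (y : W) ≠ 0},
          A (v.1 : V) (y.1 : W) / (‖(v.1 : V)‖ * ‖(y.1 : W)‖)) := by
      refine ⟨0, ?_⟩
      rintro r ⟨v, rfl⟩
      obtain ⟨y0⟩ := hWne
      rcases le_or_gt 0 (A (v.1 : V) (y0.1 : W) / (‖(v.1 : V)‖ * ‖(y0.1 : W)‖)) with hpos | hneg
      · exact Real.iSup_nonneg' ⟨y0, hpos⟩
      · refine Real.iSup_nonneg' ⟨⟨-y0.1, by simpa using y0.2⟩, ?_⟩
        have : A (v.1 : V) ((-y0.1 : Wr) : W) = -(A (v.1 : V) (y0.1 : W)) := by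
          simp
        rw [this]
        simp only [Submodule.coe_neg, norm_neg]
        rw [neg_div]
        linarith
    have h1 : α ≤ ⨆ y : {y : Wr // (y : W) ≠ 0},
        A (vv.1 : V) (y.1 : W) / (‖(vv.1 : V)‖ * ‖(y.1 : W)‖) :=
      hαdef ▸ ciInf_le houter_bdd vv
    have h2 : (⨆ y : {y : Wr // (y : W) ≠ 0},
        A (vv.1 : V) (y.1 : W) / (‖(vv.1 : V)‖ * ‖(y.1 : W)‖)) ≤ ‖A‖ * ‖P x‖ / ‖x‖ := by
      apply Real.iSup_le _ (by positivity)
      intro y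
      have hyn : (0:ℝ) < ‖(y.1 : W)‖ := norm_pos_iff.mpr y.2
      have hzero : ⟪Tl (y.1 : W), x - P x⟫_ℝ = 0 :=
        (hPorth x) _ ⟨(y.1 : W), y.1.2, rfl⟩
      have hAxy : A x (y.1 : W) = ⟪Tl (y.1 : W), P x⟫_ℝ := by
        rw [← hT_inner]
        have : x = (x - P x) + P x := by abel
        calc ⟪Tl (y.1 : W), x⟫_ℝ = ⟪Tl (y.1 : W), (x - P x) + P x⟫_ℝ := by rw [← this]
        _ = ⟪Tl (y.1 : W), x - P x⟫_ℝ + ⟪Tl (y.1 : W), P x⟫_ℝ := inner_add_right _ _ _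
        _ = ⟪Tl (y.1 : W), P x⟫_ℝ := by rw [hzero, zero_add]
      have hbound : A x (y.1 : W) ≤ ‖A‖ * ‖(y.1 : W)‖ * ‖P x‖ := by
        rw [hAxy]
        calc ⟪Tl (y.1 : W), P x⟫_ℝ ≤ ‖Tl (y.1 : W)‖ * ‖P x‖ := real_inner_le_norm _ _
        _ ≤ ‖A‖ * ‖(y.1 : W)‖ * ‖P x‖ := by
            have := hT_norm (y.1 : W)
            nlinarith [norm_nonneg (P x)]
      have hden : (0:ℝ) < ‖(vv.1 : V)‖ * ‖(y.1 : W)‖ := mul_pos hxn hyn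
      rw [div_le_div_iff₀ hden hxn]
      have hvx : (vv.1 : V) = x := rfl
      rw [hvx]
      nlinarith [norm_nonneg x]
    have h3 : α ≤ ‖A‖ * ‖P x‖ / ‖x‖ := h1.trans h2
    rw [le_div_iff₀ hxn] at h3
    linarith
  -- δ < 1
  set c : ℝ := α / ‖A‖ with hc
  have hcpos : 0 < c := div_pos hα hA_pos
  have hδlt : δ < 1 := by
    obtain ⟨⟨x0, hx00⟩⟩ := hVne
    have hx0n : (0:ℝ) < ‖(x0 : V)‖ := norm_pos_iff.mpr hx00
    have hc1 : c ≤ 1 := by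
      have hk := hkey (x0 : V) x0.2 hx00
      have hle := (hP_le (x0 : V)).1
      rw [hc, div_le_one hA_pos]
      nlinarith
    have h1c : 0 ≤ 1 - c ^ 2 := by nlinarith
    have hsub : ∀ v : {v : Vr // (v : V) ≠ 0},
        (⨅ y : Wr, ‖(v.1 : V) - (toDual ℝ V).symm (A.flip (y : W))‖ / ‖(v.1 : V)‖)
          ≤ Real.sqrt (1 - c ^ 2) := by
      intro v
      have hxn : (0:ℝ) < ‖(v.1 : V)‖ := norm_pos_iff.mpr v.2
      obtain ⟨y0, hy0, hTy0⟩ := hPmem (v.1 : V)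
      have h1 : (⨅ y : Wr, ‖(v.1 : V) - (toDual ℝ V).symm (A.flip (y : W))‖ / ‖(v.1 : V)‖)
          ≤ ‖(v.1 : V) - P (v.1 : V)‖ / ‖(v.1 : V)‖ := by
        have := ciInf_le (hδinner_bdd v) (⟨y0, hy0⟩ : Wr)
        rwa [show (toDual ℝ V).symm (A.flip y0) = P (v.1 : V) from hTy0] at this
      refine h1.trans ?_
      rw [div_le_iff₀ hxn]
      -- ‖x - Px‖^2 ≤ (1 - c^2) ‖x‖^2
      have hk := hkey (v.1 : V) v.1.2 v.2
      have hPlb : c * ‖(v.1 : V)‖ ≤ ‖P (v.1 : V)‖ := by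
        rw [hc, div_mul_eq_mul_div, div_le_iff₀ hA_pos]
        nlinarith
      have hpyth := (hP_le (v.1 : V)).2
      have hsq : ‖(v.1 : V) - P (v.1 : V)‖ ^ 2 ≤ (1 - c ^ 2) * ‖(v.1 : V)‖ ^ 2 := by
        nlinarith [norm_nonneg (P (v.1 : V)), mul_pos hcpos hxn]
      have h4 : ‖(v.1 : V) - P (v.1 : V)‖ ≤ Real.sqrt (1 - c ^ 2) * ‖(v.1 : V)‖ := by
        have h5 : Real.sqrt (‖(v.1 : V) - P (v.1 : V)‖ ^ 2)
            ≤ Real.sqrt ((1 - c ^ 2) * ‖(v.1 : V)‖ ^ 2) := Real.sqrt_le_sqrt hsq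
        rwa [Real.sqrt_sq (norm_nonneg _), Real.sqrt_mul h1c,
          Real.sqrt_sq (norm_nonneg _)] at h5
      exact h4
    have hle : δ ≤ Real.sqrt (1 - c ^ 2) :=
      hδ ▸ Real.iSup_le hsub (Real.sqrt_nonneg _)
    refine hle.trans_lt ?_
    rw [Real.sqrt_lt' one_pos]
    nlinarith
  -- quasi-optimality
  set s : ℝ := Real.sqrt (1 - δ ^ 2) with hs
  have hspos : 0 < s := Real.sqrt_pos.mpr (by nlinarith)
  have hssq : s ^ 2 = 1 - δ ^ 2 := Real.sq_sqrt (by nlinarith)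
  have hquasi : ∀ v : Vr, ‖e‖ * s ≤ ‖u - (v : V)‖ := by
    intro v
    set w : V := ur - (v : V) with hw
    have hwm : w ∈ Vr := Vr.sub_mem hurm v.2
    have huv : u - (v : V) = e + w := by rw [he, hw]; abel
    have hzero : ⟪e, P w⟫_ℝ = 0 := he_orth _ (hPmem w)
    have hip : -(δ * ‖e‖ * ‖w‖) ≤ ⟪e, w⟫_ℝ := by
      have hsplit : ⟪e, w⟫_ℝ = ⟪e, w - P w⟫_ℝ := by
        rw [inner_sub_right e w (P w), hzero, sub_zero]
      have habs : |⟪e, w - P w⟫_ℝ| ≤ ‖e‖ * ‖w - P w‖ := abs_real_inner_le_norm _ _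
      have hproj := hprojδ w hwm
      have h1 : ‖e‖ * ‖w - P w‖ ≤ ‖e‖ * (δ * ‖w‖) :=
        mul_le_mul_of_nonneg_left hproj (norm_nonneg _)
      rw [hsplit]
      have := neg_abs_le ⟪e, w - P w⟫_ℝ
      nlinarith
    have hnormsq : ‖u - (v : V)‖ ^ 2 = ‖e‖ ^ 2 + 2 * ⟪e, w⟫_ℝ + ‖w‖ ^ 2 := by
      rw [huv]; exact norm_add_sq_real e w
    have hsq2 : (‖e‖ * s) ^ 2 ≤ ‖u - (v : V)‖ ^ 2 := by
      have h1 : (‖e‖ * s) ^ 2 = ‖e‖ ^ 2 * (1 - δ ^ 2) := by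
        rw [mul_pow, hssq]
      nlinarith [sq_nonneg (‖w‖ - δ * ‖e‖), norm_nonneg e, norm_nonneg w]
    have h5 := Real.sqrt_le_sqrt hsq2
    rwa [Real.sqrt_sq (by positivity), Real.sqrt_sq (norm_nonneg _)] at h5
  haveI : Nonempty Vr := ⟨0⟩
  have hinf : ‖e‖ * s ≤ ⨅ v : Vr, ‖u - (v : V)‖ := le_ciInf hquasi
  have hinf0 : 0 ≤ ⨅ v : Vr, ‖u - (v : V)‖ :=
    Real.iInf_nonneg fun v => norm_nonneg _
  have hE : ‖e‖ ≤ s⁻¹ * ⨅ v : Vr, ‖u - (v : V)‖ := by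
    rw [← mul_le_mul_iff_right₀ hspos, ← mul_assoc, mul_inv_cancel₀ hspos.ne', one_mul]
    linarith [hinf]
  -- bound ‖L e‖ ≤ δL ‖e‖
  have hδL0 : 0 ≤ δL := hδL ▸ Real.iSup_nonneg fun z' =>
    Real.iInf_nonneg fun y => div_nonneg (norm_nonneg _) (norm_nonneg _)
  have hLe_eq : L u - L ur = L e := (map_sub L u ur).symm
  have hLbound : ‖L e‖ ≤ δL * ‖e‖ := by
    by_cases hLe : L e = 0
    · rw [hLe, norm_zero]
      exact mul_nonneg hδL0 (norm_nonneg _)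
    · have he0 : e ≠ 0 := fun h => hLe (by rw [h, map_zero])
      have hen : (0:ℝ) < ‖e‖ := norm_pos_iff.mpr he0
      set z' : StrongDual ℝ Z := toDual ℝ Z (L e) with hz'
      have hz'norm : ‖z'‖ = ‖L e‖ := (toDual ℝ Z).norm_map (L e)
      have hLen : (0:ℝ) < ‖L e‖ := norm_pos_iff.mpr hLe
      have hz'ne : z' ≠ 0 := by
        rw [hz', ne_eq, (toDual ℝ Z).map_eq_zero_iff]
        exact hLe
      have key : ∀ y : Wr, ‖L e‖ ^ 2 ≤ ‖z'.comp L - A.flip (y : W)‖ * ‖e‖ := by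
        intro y
        have happ : (z'.comp L - A.flip (y : W)) e = ‖L e‖ ^ 2 := by
          rw [ContinuousLinearMap.sub_apply, ContinuousLinearMap.comp_apply]
          have h1 : z' (L e) = ‖L e‖ ^ 2 := by
            rw [hz', toDual_apply_apply, real_inner_self_eq_norm_sq]
          have h2 : A.flip (y : W) e = A e (y : W) := rfl
          rw [h1, h2, hGal _ y.2, sub_zero]
        calc ‖L e‖ ^ 2 = (z'.comp L - A.flip (y : W)) e := happ.symm
        _ ≤ ‖(z'.comp L - A.flip (y : W)) e‖ := le_abs_self _
        _ ≤ ‖z'.comp L - A.flip (y : W)‖ * ‖e‖ := (z'.comp L - A.flip (y : W)).le_opNorm e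
      have hδLfam_bdd : BddAbove (Set.range fun z' : {z' : StrongDual ℝ Z // z' ≠ 0} =>
          ⨅ y : Wr, ‖(z'.1).comp L - A.flip (y : W)‖ / ‖z'.1‖) := by
        refine ⟨‖L‖, ?_⟩
        rintro r ⟨w', rfl⟩
        have hwn : (0:ℝ) < ‖w'.1‖ := norm_pos_iff.mpr w'.2
        have h0 : (⨅ y : Wr, ‖(w'.1).comp L - A.flip (y : W)‖ / ‖w'.1‖)
            ≤ ‖(w'.1).comp L - A.flip ((0 : Wr) : W)‖ / ‖w'.1‖ := by
          apply ciInf_le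
          exact ⟨0, by rintro r ⟨y, rfl⟩; exact div_nonneg (norm_nonneg _) (norm_nonneg _)⟩
        rw [Submodule.coe_zero, map_zero, sub_zero] at h0
        refine h0.trans ?_
        rw [div_le_iff₀ hwn]
        calc ‖(w'.1).comp L‖ ≤ ‖w'.1‖ * ‖L‖ := (w'.1).opNorm_comp_le L
        _ = ‖L‖ * ‖w'.1‖ := by ring
      have hlow : ‖L e‖ / ‖e‖ ≤ ⨅ y : Wr, ‖z'.comp L - A.flip (y : W)‖ / ‖z'‖ := by
        apply le_ciInf
        intro y
        have hz'pos : (0:ℝ) < ‖z'‖ := by rw [hz'norm]; exact hLen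
        rw [div_le_div_iff₀ hen hz'pos]
        have := key y
        rw [hz'norm, ← pow_two]
        exact this
      have hup : (⨅ y : Wr, ‖z'.comp L - A.flip (y : W)‖ / ‖z'‖) ≤ δL :=
        hδL ▸ le_ciSup hδLfam_bdd (⟨z', hz'ne⟩ : {z' : StrongDual ℝ Z // z' ≠ 0})
      have h6 : ‖L e‖ / ‖e‖ ≤ δL := hlow.trans hup
      rw [div_le_iff₀ hen] at h6
      linarith
  -- conclusion
  rw [hLe_eq]
  calc ‖L e‖ ≤ δL * ‖e‖ := hLbound
  _ ≤ δL * (s⁻¹ * ⨅ v : Vr, ‖u - (v : V)‖) := mul_le_mul_of_nonneg_left hE hδL0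
  _ = δL * s⁻¹ * ⨅ v : Vr, ‖u - (v : V)‖ := by ring
end
end

section
/- Let V, W be Hilbert spaces and A ∈ L(V, W') satisfy β := sup_{0≠v∈V} sup_{0≠w∈W} ⟨Av,w⟩/(‖v‖_V‖w‖_W) < ∞. For finite-dimensional subspaces V_r ⊆ V and W_r ⊆ W with discrete inf-sup constant α_{V_r,W_r} > 0, the constant δ_{V_r,W_r} = sup_{0≠v∈V_r} inf_{y∈W_r} ‖v − R_V⁻¹A*y‖_V/‖v‖_V satisfies δ_{V_r,W_r}² ≤ 1 − α_{V_r,W_r}²/β_{W_r}² ≤ 1 − α_{V_r,W_r}²/β², where β_{W_r} := sup_{0≠y∈W_r} ‖A*y‖_{V'}/‖y‖_W. -/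
noncomputable section
open InnerProductSpace
open scoped RealInnerProductSpace

private lemma aux_norm_expand {V : Type*} [NormedAddCommGroup V] [InnerProductSpace ℝ V]
    (x z : V) (hz : z ≠ 0) :
    ‖x - (⟪z, x⟫_ℝ / ‖z‖ ^ 2) • z‖ ^ 2 = ‖x‖ ^ 2 - ⟪z, x⟫_ℝ ^ 2 / ‖z‖ ^ 2 := by
  have hzn : (‖z‖ : ℝ) ≠ 0 := norm_ne_zero_iff.2 hz
  set t : ℝ := ⟪z, x⟫_ℝ / ‖z‖ ^ 2 with ht
  have h2 : ⟪x, t • z⟫_ℝ = t * ⟪z, x⟫_ℝ := by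
    rw [real_inner_smul_right, real_inner_comm]
  have h3 : ‖t • z‖ ^ 2 = t ^ 2 * ‖z‖ ^ 2 := by
    rw [norm_smul, mul_pow]
    simp [sq_abs]
  rw [norm_sub_sq_real, h2, h3, ht]
  field_simp
  ring

set_option maxHeartbeats 1000000 in
theorem stmt_4 {V W : Type*}
    [NormedAddCommGroup V] [InnerProductSpace ℝ V] [CompleteSpace V]
    [NormedAddCommGroup W] [InnerProductSpace ℝ W] [CompleteSpace W]
    (A : V →L[ℝ] StrongDual ℝ W)
    (Vr : Submodule ℝ V) (Wr : Submodule ℝ W)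
    [FiniteDimensional ℝ Vr] [FiniteDimensional ℝ Wr]
    (α : ℝ)
    (hαdef : α = ⨅ v : {v : Vr // (v : V) ≠ 0}, ⨆ y : {y : Wr // (y : W) ≠ 0},
        A (v.1 : V) (y.1 : W) / (‖(v.1 : V)‖ * ‖(y.1 : W)‖))
    (hα : 0 < α)
    (δ : ℝ)
    (hδ : δ = ⨆ v : {v : Vr // (v : V) ≠ 0}, ⨅ y : Wr,
        ‖(v.1 : V) - (toDual ℝ V).symm (A.flip (y : W))‖ / ‖(v.1 : V)‖)
    (βWr : ℝ)
    (hβWr : βWr = ⨆ y : {y : Wr // (y : W) ≠ 0}, ‖A.flip (y.1 : W)‖ / ‖(y.1 : W)‖)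
    (β : ℝ)
    (hβ : β = ⨆ v : {v : V // v ≠ 0}, ⨆ w : {w : W // w ≠ 0},
        A v.1 w.1 / (‖v.1‖ * ‖w.1‖)) :
    δ ^ 2 ≤ 1 - α ^ 2 / βWr ^ 2 ∧ 1 - α ^ 2 / βWr ^ 2 ≤ 1 - α ^ 2 / β ^ 2 := by
  classical
  -- nonemptiness of the index types
  have hVne : Nonempty {v : Vr // (v : V) ≠ 0} := by
    by_contra h
    rw [not_nonempty_iff] at h
    rw [hαdef, Real.iInf_of_isEmpty] at hα
    exact lt_irrefl 0 hα
  have hWne : Nonempty {y : Wr // (y : W) ≠ 0} := by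
    by_contra h
    rw [not_nonempty_iff] at h
    rw [hαdef] at hα
    simp only [Real.iSup_of_isEmpty] at hα
    rw [ciInf_const] at hα
    exact lt_irrefl 0 hα
  -- the map u : Wr → V
  set u : Wr → V := fun y => (toDual ℝ V).symm (A.flip (y : W)) with hu
  have hip : ∀ (y : Wr) (v : V), ⟪u y, v⟫_ℝ = A v (y : W) := fun y v =>
    toDual_symm_apply
  have hunorm : ∀ y : Wr, ‖u y‖ = ‖A.flip (y : W)‖ := fun y =>
    LinearIsometryEquiv.norm_map _ _
  have hu0 : u 0 = 0 := by simp [hu]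
  have husmul : ∀ (t : ℝ) (y : Wr), u (t • y) = t • u y := by
    intro t y
    simp [hu, Submodule.coe_smul, map_smul]
  -- basic bound on A
  have hAle : ∀ (v : V) (w : W), |A v w| ≤ ‖A‖ * ‖v‖ * ‖w‖ := fun v w => by
    simpa using A.le_opNorm₂ v w
  have hterm_le : ∀ (v : V) (w : W), A v w / (‖v‖ * ‖w‖) ≤ ‖A‖ := by
    intro v w
    rcases eq_or_ne v 0 with rfl | hv
    · simp; positivity
    rcases eq_or_ne w 0 with rfl | hw
    · simp; positivity
    rw [div_le_iff₀ (mul_pos (norm_pos_iff.2 hv) (norm_pos_iff.2 hw))]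
    calc A v w ≤ |A v w| := le_abs_self _
      _ ≤ ‖A‖ * ‖v‖ * ‖w‖ := hAle v w
      _ = ‖A‖ * (‖v‖ * ‖w‖) := by ring
  -- βWr facts
  have bddWr : BddAbove (Set.range fun y : {y : Wr // (y : W) ≠ 0} =>
      ‖A.flip (y.1 : W)‖ / ‖(y.1 : W)‖) := by
    refine ⟨‖A‖, ?_⟩
    rintro x ⟨y, rfl⟩
    rw [div_le_iff₀ (norm_pos_iff.2 y.2)]
    calc ‖A.flip (y.1 : W)‖ ≤ ‖A.flip‖ * ‖(y.1 : W)‖ := A.flip.le_opNorm _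
      _ = ‖A‖ * ‖(y.1 : W)‖ := by rw [A.opNorm_flip]
  have hβWr_ge : ∀ y : {y : Wr // (y : W) ≠ 0},
      ‖A.flip (y.1 : W)‖ / ‖(y.1 : W)‖ ≤ βWr := by
    intro y
    rw [hβWr]
    exact le_ciSup bddWr y
  obtain ⟨y0⟩ := id hWne
  have hβWr_nonneg : 0 ≤ βWr :=
    le_trans (by positivity) (hβWr_ge y0)
  have hu_le : ∀ y : Wr, ‖u y‖ ≤ βWr * ‖(y : W)‖ := by
    intro y
    rcases eq_or_ne ((y : W)) 0 with h | h
    · have : y = 0 := by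
        ext; exact h
      simp [this, hu0]
    · rw [hunorm]
      exact (div_le_iff₀ (norm_pos_iff.2 h)).1 (hβWr_ge ⟨y, h⟩)
  -- the function d
  set d : {v : Vr // (v : V) ≠ 0} → ℝ := fun v =>
    ⨅ y : Wr, ‖(v.1 : V) - u y‖ / ‖(v.1 : V)‖ with hd
  have hδ' : δ = ⨆ v, d v := hδ
  have hd_bdd : ∀ v : {v : Vr // (v : V) ≠ 0},
      BddBelow (Set.range fun y : Wr => ‖(v.1 : V) - u y‖ / ‖(v.1 : V)‖) := by
    intro v
    exact ⟨0, by rintro x ⟨y, rfl⟩; positivity⟩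
  have hd0 : ∀ v, 0 ≤ d v := fun v =>
    le_ciInf fun y => by positivity
  have hd_le : ∀ (v : {v : Vr // (v : V) ≠ 0}) (y : Wr),
      d v ≤ ‖(v.1 : V) - u y‖ / ‖(v.1 : V)‖ := fun v y => ciInf_le (hd_bdd v) y
  have hd1 : ∀ v, d v ≤ 1 := by
    intro v
    have := hd_le v 0
    rwa [hu0, sub_zero, div_self (norm_ne_zero_iff.2 v.2)] at this
  -- core estimate
  have hcore : ∀ (v : {v : Vr // (v : V) ≠ 0}) (y : {y : Wr // (y : W) ≠ 0}),
      (A (v.1 : V) (y.1 : W) / (‖(v.1 : V)‖ * ‖(y.1 : W)‖)) ^ 2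
        ≤ (1 - d v ^ 2) * βWr ^ 2 := by
    intro v y
    have hxpos : (0 : ℝ) < ‖(v.1 : V)‖ := norm_pos_iff.2 v.2
    have hwpos : (0 : ℝ) < ‖(y.1 : W)‖ := norm_pos_iff.2 y.2
    have h1d : 0 ≤ 1 - d v ^ 2 := by nlinarith [hd0 v, hd1 v]
    rcases eq_or_ne (u y.1) 0 with hz | hz
    · have : A (v.1 : V) (y.1 : W) = 0 := by
        rw [← hip y.1 (v.1 : V), hz, inner_zero_left]
      rw [this]
      have : (0 : ℝ) ≤ (1 - d v ^ 2) * βWr ^ 2 := by positivity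
      simpa using this
    · have hupos : (0 : ℝ) < ‖u y.1‖ := norm_pos_iff.2 hz
      set c : ℝ := ⟪u y.1, (v.1 : V)⟫_ℝ with hc
      set t : ℝ := c / ‖u y.1‖ ^ 2 with ht
      have key : d v ≤ ‖(v.1 : V) - t • u y.1‖ / ‖(v.1 : V)‖ := by
        have := hd_le v (t • y.1)
        rwa [husmul t y.1] at this
      have hsq : d v ^ 2 * ‖(v.1 : V)‖ ^ 2 ≤ ‖(v.1 : V) - t • u y.1‖ ^ 2 := by
        have h2 : d v ^ 2 ≤ (‖(v.1 : V) - t • u y.1‖ / ‖(v.1 : V)‖) ^ 2 :=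
          pow_le_pow_left₀ (hd0 v) key 2
        rw [div_pow] at h2
        calc d v ^ 2 * ‖(v.1 : V)‖ ^ 2
            ≤ (‖(v.1 : V) - t • u y.1‖ ^ 2 / ‖(v.1 : V)‖ ^ 2) * ‖(v.1 : V)‖ ^ 2 :=
              mul_le_mul_of_nonneg_right h2 (by positivity)
          _ = ‖(v.1 : V) - t • u y.1‖ ^ 2 := by
              field_simp
      have hexp : ‖(v.1 : V) - t • u y.1‖ ^ 2
          = ‖(v.1 : V)‖ ^ 2 - c ^ 2 / ‖u y.1‖ ^ 2 :=
        aux_norm_expand (v.1 : V) (u y.1) hz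
      have hsq' : d v ^ 2 * ‖(v.1 : V)‖ ^ 2
          ≤ ‖(v.1 : V)‖ ^ 2 - c ^ 2 / ‖u y.1‖ ^ 2 := by rw [← hexp]; exact hsq
      have h6 : c ^ 2 / ‖u y.1‖ ^ 2 ≤ (1 - d v ^ 2) * ‖(v.1 : V)‖ ^ 2 := by
        nlinarith [hsq']
      have h7 : c ^ 2 ≤ (1 - d v ^ 2) * ‖(v.1 : V)‖ ^ 2 * ‖u y.1‖ ^ 2 := by
        have := (div_le_iff₀ (by positivity : (0:ℝ) < ‖u y.1‖ ^ 2)).1 h6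
        linarith [this]
      have hub2 : ‖u y.1‖ ^ 2 ≤ βWr ^ 2 * ‖(y.1 : W)‖ ^ 2 := by
        nlinarith [hu_le y.1, norm_nonneg (u y.1), hwpos, hβWr_nonneg]
      have h8 : (1 - d v ^ 2) * ‖(v.1 : V)‖ ^ 2 * ‖u y.1‖ ^ 2
          ≤ (1 - d v ^ 2) * ‖(v.1 : V)‖ ^ 2 * (βWr ^ 2 * ‖(y.1 : W)‖ ^ 2) :=
        mul_le_mul_of_nonneg_left hub2 (by positivity)
      have hAeq : A (v.1 : V) (y.1 : W) = c := (hip y.1 (v.1 : V)).symm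
      rw [hAeq, div_pow, div_le_iff₀ (by positivity : (0:ℝ) < (‖(v.1 : V)‖ * ‖(y.1 : W)‖) ^ 2)]
      nlinarith [h7, h8]
  -- inner sup bound and α ≤ ...
  set s : {v : Vr // (v : V) ≠ 0} → ℝ := fun v =>
    ⨆ y : {y : Wr // (y : W) ≠ 0},
      A (v.1 : V) (y.1 : W) / (‖(v.1 : V)‖ * ‖(y.1 : W)‖) with hs
  have hs_bdd : ∀ v : {v : Vr // (v : V) ≠ 0}, BddAbove (Set.range fun y : {y : Wr // (y : W) ≠ 0} =>
      A (v.1 : V) (y.1 : W) / (‖(v.1 : V)‖ * ‖(y.1 : W)‖)) := by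
    intro v
    exact ⟨‖A‖, by rintro x ⟨y, rfl⟩; exact hterm_le _ _⟩
  have hs_nonneg : ∀ v, 0 ≤ s v := by
    intro v
    rcases le_or_gt 0 (A (v.1 : V) (y0.1 : W) / (‖(v.1 : V)‖ * ‖(y0.1 : W)‖)) with h | h
    · exact h.trans (le_ciSup (hs_bdd v) y0)
    · have hy0' : ((-y0.1 : Wr) : W) ≠ 0 := by
        simpa using y0.2
      have hterm : A (v.1 : V) ((-y0.1 : Wr) : W) / (‖(v.1 : V)‖ * ‖((-y0.1 : Wr) : W)‖)
          = -(A (v.1 : V) (y0.1 : W) / (‖(v.1 : V)‖ * ‖(y0.1 : W)‖)) := by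
        push_cast
        rw [map_neg, norm_neg, neg_div]
      have := le_ciSup (hs_bdd v) ⟨-y0.1, hy0'⟩
      rw [hterm] at this
      linarith
  have hα_le_s : ∀ v, α ≤ s v := by
    intro v
    rw [hαdef]
    exact ciInf_le ⟨0, by rintro x ⟨w, rfl⟩; exact hs_nonneg w⟩ v
  have hαsq : ∀ v, α ^ 2 ≤ (1 - d v ^ 2) * βWr ^ 2 := by
    intro v
    have h1d : 0 ≤ 1 - d v ^ 2 := by nlinarith [hd0 v, hd1 v]
    have hrhs : (0:ℝ) ≤ (1 - d v ^ 2) * βWr ^ 2 := by positivity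
    have hsle : s v ≤ Real.sqrt ((1 - d v ^ 2) * βWr ^ 2) := by
      refine ciSup_le fun y => ?_
      calc A (v.1 : V) (y.1 : W) / (‖(v.1 : V)‖ * ‖(y.1 : W)‖)
          ≤ |A (v.1 : V) (y.1 : W) / (‖(v.1 : V)‖ * ‖(y.1 : W)‖)| := le_abs_self _
        _ = Real.sqrt ((A (v.1 : V) (y.1 : W) / (‖(v.1 : V)‖ * ‖(y.1 : W)‖)) ^ 2) :=
            (Real.sqrt_sq_eq_abs _).symm
        _ ≤ Real.sqrt ((1 - d v ^ 2) * βWr ^ 2) := Real.sqrt_le_sqrt (hcore v y)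
    have := (hα_le_s v).trans hsle
    exact (Real.le_sqrt hα.le hrhs).1 this
  obtain ⟨v0⟩ := id hVne
  have hβWr_pos : 0 < βWr := by
    rcases hβWr_nonneg.lt_or_eq with h | h
    · exact h
    · exfalso
      have := hαsq v0
      rw [← h] at this
      nlinarith [hα]
  -- δ² bound
  have hX : 0 ≤ 1 - α ^ 2 / βWr ^ 2 := by
    have := hαsq v0
    have h2 : α ^ 2 / βWr ^ 2 ≤ 1 - d v0 ^ 2 :=
      (div_le_iff₀ (by positivity)).2 (by linarith)
    nlinarith [hd0 v0, sq_nonneg (d v0)]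
  have hd_le_c : ∀ v, d v ≤ Real.sqrt (1 - α ^ 2 / βWr ^ 2) := by
    intro v
    have h2 : α ^ 2 / βWr ^ 2 ≤ 1 - d v ^ 2 :=
      (div_le_iff₀ (by positivity)).2 (by linarith [hαsq v])
    exact (Real.le_sqrt (hd0 v) hX).2 (by linarith)
  have hδle : δ ≤ Real.sqrt (1 - α ^ 2 / βWr ^ 2) := by
    rw [hδ']
    exact ciSup_le hd_le_c
  have hδ0 : 0 ≤ δ := by
    have hbdd : BddAbove (Set.range d) :=
      ⟨Real.sqrt (1 - α ^ 2 / βWr ^ 2), by rintro x ⟨v, rfl⟩; exact hd_le_c v⟩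
    have : d v0 ≤ δ := by rw [hδ']; exact le_ciSup hbdd v0
    linarith [hd0 v0]
  have hfirst : δ ^ 2 ≤ 1 - α ^ 2 / βWr ^ 2 := by
    have := pow_le_pow_left₀ hδ0 hδle 2
    rwa [Real.sq_sqrt hX] at this
  -- second part : βWr ≤ β
  have hWne' : Nonempty {w : W // w ≠ 0} := ⟨⟨(y0.1 : W), y0.2⟩⟩
  have hVne' : Nonempty {v : V // v ≠ 0} := ⟨⟨(v0.1 : V), v0.2⟩⟩
  have hβ_inner_bdd : ∀ v : {v : V // v ≠ 0},
      BddAbove (Set.range fun w : {w : W // w ≠ 0} => A v.1 w.1 / (‖v.1‖ * ‖w.1‖)) :=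
    fun v => ⟨‖A‖, by rintro x ⟨w, rfl⟩; exact hterm_le _ _⟩
  have hβ_outer_bdd : BddAbove (Set.range fun v : {v : V // v ≠ 0} =>
      ⨆ w : {w : W // w ≠ 0}, A v.1 w.1 / (‖v.1‖ * ‖w.1‖)) := by
    refine ⟨‖A‖, ?_⟩
    rintro x ⟨v, rfl⟩
    exact ciSup_le fun w => hterm_le _ _
  have hβ_ge : ∀ (v : V) (w : W), v ≠ 0 → w ≠ 0 → A v w / (‖v‖ * ‖w‖) ≤ β := by
    intro v w hv hw
    rw [hβ]
    calc A v w / (‖v‖ * ‖w‖)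
        ≤ ⨆ w' : {w : W // w ≠ 0}, A v w'.1 / (‖v‖ * ‖w'.1‖) :=
          le_ciSup (hβ_inner_bdd ⟨v, hv⟩) ⟨w, hw⟩
      _ ≤ _ := le_ciSup hβ_outer_bdd ⟨v, hv⟩
  have hβ0 : 0 ≤ β := by
    rcases le_or_gt 0 (A (v0.1 : V) (y0.1 : W) / (‖(v0.1 : V)‖ * ‖(y0.1 : W)‖)) with h | h
    · exact h.trans (hβ_ge _ _ v0.2 y0.2)
    · have hneg : (- (y0.1 : W)) ≠ 0 := by simpa using y0.2
      have := hβ_ge (v0.1 : V) (-(y0.1 : W)) v0.2 hneg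
      rw [map_neg, norm_neg, neg_div] at this
      linarith
  have hAvw : ∀ (v : V) (w : W), |A v w| ≤ β * ‖v‖ * ‖w‖ := by
    intro v w
    rcases eq_or_ne v 0 with rfl | hv
    · simp
    rcases eq_or_ne w 0 with rfl | hw
    · simp
    have hvp : (0:ℝ) < ‖v‖ := norm_pos_iff.2 hv
    have hwp : (0:ℝ) < ‖w‖ := norm_pos_iff.2 hw
    rw [abs_le]
    constructor
    · have hneg : (-v) ≠ 0 := by simpa using hv
      have h := hβ_ge (-v) w hneg hw
      have h2 : A (-v) w = -(A v w) := by simp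
      rw [h2, norm_neg, div_le_iff₀ (by positivity)] at h
      nlinarith [h]
    · have := hβ_ge v w hv hw
      rw [div_le_iff₀ (by positivity)] at this
      nlinarith [this]
  have hβWr_le_β : βWr ≤ β := by
    rw [hβWr]
    refine ciSup_le fun y => ?_
    have hn : ‖A.flip (y.1 : W)‖ ≤ β * ‖(y.1 : W)‖ := by
      refine ContinuousLinearMap.opNorm_le_bound _ (by positivity) fun v => ?_
      have := hAvw v (y.1 : W)
      calc ‖A.flip (y.1 : W) v‖ = |A v (y.1 : W)| := rfl
        _ ≤ β * ‖v‖ * ‖(y.1 : W)‖ := hAvw v (y.1 : W)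
        _ = β * ‖(y.1 : W)‖ * ‖v‖ := by ring
    exact (div_le_iff₀ (norm_pos_iff.2 y.2)).2 hn
  have hsecond : 1 - α ^ 2 / βWr ^ 2 ≤ 1 - α ^ 2 / β ^ 2 := by
    have hb2 : βWr ^ 2 ≤ β ^ 2 := by nlinarith [hβWr_pos, hβWr_le_β]
    have : α ^ 2 / β ^ 2 ≤ α ^ 2 / βWr ^ 2 :=
      div_le_div_of_nonneg_left (sq_nonneg α) (by positivity) hb2
    linarith
  exact ⟨hfirst, hsecond⟩
end
end

section
/- Let V, W, Z be Hilbert spaces, A ∈ L(V, W') invertible, b ∈ W', u = A⁻¹b, L ∈ L(V, Z), s = Lu, and let ũ ∈ V and Q̃ ∈ L(Z', W) be arbitrary. Define s̃ = Lũ + Q̃*(b − Aũ). Then ‖s − s̃‖_Z ≤ ‖u − ũ‖_V · ‖L* − A* Q̃‖_{Z'→V'}, where ‖L* − A* Q̃‖_{Z'→V'} = sup_{0≠z'∈Z'} ‖(L* − A* Q̃) z'‖_{V'} / ‖z'‖_{Z'}. -/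
noncomputable section
open InnerProductSpace
open scoped RealInnerProductSpace

theorem stmt_7 {V W Z : Type*}
    [NormedAddCommGroup V] [InnerProductSpace ℝ V] [CompleteSpace V]
    [NormedAddCommGroup W] [InnerProductSpace ℝ W] [CompleteSpace W]
    [NormedAddCommGroup Z] [InnerProductSpace ℝ Z] [CompleteSpace Z]
    (A : V →L[ℝ] StrongDual ℝ W) (hA : Function.Bijective A)
    (b : StrongDual ℝ W) (u : V) (hu : A u = b)
    (L : V →L[ℝ] Z) (ut : V) (Qt : StrongDual ℝ Z →L[ℝ] W)
    (st : Z) (hst : ∀ z' : StrongDual ℝ Z, z' st = z' (L ut) + (b - A ut) (Qt z')) :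
    ‖L u - st‖ ≤ ‖u - ut‖ * ⨆ z' : {z' : StrongDual ℝ Z // z' ≠ 0},
        ‖(z'.1).comp L - A.flip (Qt z'.1)‖ / ‖z'.1‖ := by
  set S := ⨆ z' : {z' : StrongDual ℝ Z // z' ≠ 0},
      ‖(z'.1).comp L - A.flip (Qt z'.1)‖ / ‖z'.1‖ with hS
  have hSnn : 0 ≤ S := by
    apply Real.iSup_nonneg
    intro z'
    positivity
  have hbdd : BddAbove (Set.range fun z' : {z' : StrongDual ℝ Z // z' ≠ 0} =>
      ‖(z'.1).comp L - A.flip (Qt z'.1)‖ / ‖z'.1‖) := by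
    refine ⟨‖L‖ + ‖A.flip‖ * ‖Qt‖, ?_⟩
    rintro x ⟨⟨z', hz'⟩, rfl⟩
    have hz : 0 < ‖z'‖ := norm_pos_iff.mpr hz'
    rw [div_le_iff₀ hz]
    have h1 : ‖z'.comp L‖ ≤ ‖z'‖ * ‖L‖ := z'.opNorm_comp_le L
    have h2 : ‖A.flip (Qt z')‖ ≤ ‖A.flip‖ * ‖Qt z'‖ := A.flip.le_opNorm _
    have h3 : ‖Qt z'‖ ≤ ‖Qt‖ * ‖z'‖ := Qt.le_opNorm _
    have h0 : ‖z'.comp L - A.flip (Qt z')‖ ≤ ‖z'.comp L‖ + ‖A.flip (Qt z')‖ :=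
      norm_sub_le _ _
    nlinarith [norm_nonneg (A.flip), norm_nonneg z', norm_nonneg (Qt z')]
  set x := L u - st with hx
  -- key identity
  have key : ∀ z' : StrongDual ℝ Z,
      ((z'.comp L) - A.flip (Qt z')) (u - ut) = z' x := by
    intro z'
    have h := hst z'
    simp only [hx, ContinuousLinearMap.sub_apply, ContinuousLinearMap.coe_comp',
      Function.comp_apply, ContinuousLinearMap.flip_apply, map_sub, h, ← hu]
    ring
  by_cases hx0 : x = 0
  · rw [hx0, norm_zero]
    exact mul_nonneg (norm_nonneg _) hSnn
  · have hxn : 0 < ‖x‖ := norm_pos_iff.mpr hx0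
    set z' : StrongDual ℝ Z := innerSL ℝ x with hz'def
    have hz'x : z' x = ‖x‖ ^ 2 := real_inner_self_eq_norm_sq x
    have hz'norm : ‖z'‖ = ‖x‖ := innerSL_apply_norm (𝕜:=ℝ) x
    have hz'ne : z' ≠ 0 := norm_pos_iff.mp (hz'norm ▸ hxn)
    have hle : ‖z'.comp L - A.flip (Qt z')‖ / ‖z'‖ ≤ S :=
      le_ciSup hbdd (⟨z', hz'ne⟩ : {z' : StrongDual ℝ Z // z' ≠ 0})
    have hle' : ‖z'.comp L - A.flip (Qt z')‖ ≤ S * ‖x‖ := by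
      rw [div_le_iff₀ (by rw [hz'norm]; exact hxn)] at hle
      rw [hz'norm] at hle
      linarith
    have h1 : ‖x‖ ^ 2 = ((z'.comp L) - A.flip (Qt z')) (u - ut) := by
      rw [key z', hz'x]
    have h2 : ‖x‖ ^ 2 ≤ (S * ‖x‖) * ‖u - ut‖ := by
      rw [h1]
      calc ((z'.comp L) - A.flip (Qt z')) (u - ut)
          ≤ ‖((z'.comp L) - A.flip (Qt z')) (u - ut)‖ := le_abs_self _
        _ ≤ ‖(z'.comp L) - A.flip (Qt z')‖ * ‖u - ut‖ :=
            ContinuousLinearMap.le_opNorm _ _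
        _ ≤ (S * ‖x‖) * ‖u - ut‖ := by gcongr
    nlinarith [sq_nonneg ‖x‖]
end
end

section
/- Let Q_k be defined by Q_k z' = argmin_{y∈W_k^Q} ‖L*z' − A*y‖_{V'}, let r = b − A u_r ∈ W', and let y_k^⊥ ∈ W_k^Q be the unique element satisfying ⟨A R_V⁻¹ A* y_k^⊥, y⟩ = ⟨r, y⟩ for all y ∈ W_k^Q. Then Q_k* r = L R_V⁻¹ A* y_k^⊥. -/
noncomputable section
open InnerProductSpace
open scoped RealInnerProductSpace

lemma aux_min_orth {E : Type*} [NormedAddCommGroup E] [InnerProductSpace ℝ E]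
    (d w : E) (h : ∀ t : ℝ, ‖d‖ ≤ ‖d - t • w‖) : ⟪d, w⟫_ℝ = 0 := by
  by_contra hc
  have hw : w ≠ 0 := by
    rintro rfl
    simp at hc
  have hwn : (0:ℝ) < ‖w‖ := norm_pos_iff.mpr hw
  have hw2 : (0:ℝ) < ‖w‖ ^ 2 := by positivity
  set c := ⟪d, w⟫_ℝ with hcdef
  set t := c / ‖w‖ ^ 2 with htdef
  have ht := h t
  have h2 : ‖d‖ ^ 2 ≤ ‖d - t • w‖ ^ 2 := by
    nlinarith [norm_nonneg d, norm_nonneg (d - t • w)]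
  have hexp : ‖d - t • w‖ ^ 2 = ‖d‖ ^ 2 - 2 * (t * c) + t ^ 2 * ‖w‖ ^ 2 := by
    rw [norm_sub_sq_real, real_inner_smul_right, norm_smul]
    simp only [Real.norm_eq_abs, mul_pow, sq_abs]
    rfl
  have htc : t * ‖w‖ ^ 2 = c := div_mul_cancel₀ _ (ne_of_gt hw2)
  have : c = 0 := by nlinarith [sq_nonneg c]
  exact hc this

theorem stmt_10 {V W Z : Type*}
    [NormedAddCommGroup V] [InnerProductSpace ℝ V] [CompleteSpace V]
    [NormedAddCommGroup W] [InnerProductSpace ℝ W] [CompleteSpace W]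
    [NormedAddCommGroup Z] [InnerProductSpace ℝ Z] [CompleteSpace Z]
    (A : V →L[ℝ] StrongDual ℝ W) (hA : Function.Bijective A)
    (L : V →L[ℝ] Z)
    (WkQ : Submodule ℝ W) [FiniteDimensional ℝ WkQ]
    (Qk : StrongDual ℝ Z →L[ℝ] W) (hmem : ∀ z' : StrongDual ℝ Z, Qk z' ∈ WkQ)
    (hmin : ∀ z' : StrongDual ℝ Z, ∀ y ∈ WkQ,
        ‖z'.comp L - A.flip (Qk z')‖ ≤ ‖z'.comp L - A.flip y‖)
    (b : StrongDual ℝ W) (ur : V)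
    (yk : W) (hykm : yk ∈ WkQ)
    (hyk : ∀ y ∈ WkQ, A ((toDual ℝ V).symm (A.flip yk)) y = (b - A ur) y) :
    ∀ z' : StrongDual ℝ Z, (b - A ur) (Qk z') = z' (L ((toDual ℝ V).symm (A.flip yk))) := by
  intro z'
  set e := toDual ℝ V with he
  set w := e.symm (A.flip yk) with hwdef
  set u := e.symm (z'.comp L) with hudef
  set p := e.symm (A.flip (Qk z')) with hpdef
  have horth : ⟪u - p, w⟫_ℝ = 0 := by
    apply aux_min_orth
    intro t
    have hmem' : Qk z' + t • yk ∈ WkQ := WkQ.add_mem (hmem z') (WkQ.smul_mem t hykm)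
    have hm := hmin z' _ hmem'
    have heq : u - p - t • w = e.symm (z'.comp L - A.flip (Qk z' + t • yk)) := by
      have hsm : e.symm ((t : ℝ) • A.flip yk) = t • e.symm (A.flip yk) := by
        rw [LinearIsometryEquiv.map_smulₛₗ]; norm_num
      rw [hudef, hpdef, hwdef, map_sub, map_add, A.flip.map_smul, map_add, hsm]
      abel
    have h1 : ‖u - p‖ = ‖z'.comp L - A.flip (Qk z')‖ := by
      rw [hudef, hpdef, ← map_sub, e.symm.norm_map]
    have h2 : ‖u - p - t • w‖ = ‖z'.comp L - A.flip (Qk z' + t • yk)‖ := by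
      rw [heq, e.symm.norm_map]
    rw [h1, h2]; exact hm
  have hAw : A ((toDual ℝ V).symm (A.flip yk)) (Qk z') = ⟪p, w⟫_ℝ := by
    have : A.flip (Qk z') w = (e p) w := by
      rw [hpdef, e.apply_symm_apply]
    calc A ((toDual ℝ V).symm (A.flip yk)) (Qk z') = A.flip (Qk z') w := rfl
    _ = (e p) w := this
    _ = ⟪p, w⟫_ℝ := by rw [he]; exact toDual_apply_apply
  have hzL : z' (L ((toDual ℝ V).symm (A.flip yk))) = ⟪u, w⟫_ℝ := by
    have : z'.comp L w = (e u) w := by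
      rw [hudef, e.apply_symm_apply]
    calc z' (L ((toDual ℝ V).symm (A.flip yk))) = z'.comp L w := rfl
    _ = (e u) w := this
    _ = ⟪u, w⟫_ℝ := by rw [he]; exact toDual_apply_apply
  have hinner : ⟪u, w⟫_ℝ = ⟪p, w⟫_ℝ := by
    have := inner_sub_left (𝕜 := ℝ) u p w
    rw [horth] at this
    linarith
  rw [← hyk _ (hmem z'), hAw, hzL, hinner]
end
end

section
/- Let u_r be the Petrov-Galerkin projection of u = A⁻¹b onto V_r with test space W_r, and let Q_k be the optimal dual approximation with range in W_k^Q (characterized by ⟨L*z' − A*Q_k z', R_V⁻¹A* y⟩ = 0 for all y ∈ W_k^Q, z' ∈ Z'). Then the primal-dual estimate s̃ = L u_r + Q_k*(b − A u_r) satisfies ‖s − s̃‖_Z ≤ δ^L_{W_k^Q} · inf_{y∈W_k^Q} ‖u − u_r − R_V⁻¹A*y‖_V, where δ^L_{W_k^Q} = sup_{0≠z'∈Z'} inf_{y∈W_k^Q} ‖L*z' − A*y‖_{V'}/‖z'‖_{Z'}. -/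
noncomputable section
open InnerProductSpace
open scoped RealInnerProductSpace

set_option maxHeartbeats 1000000 in
theorem stmt_11 {V W Z : Type*}
    [NormedAddCommGroup V] [InnerProductSpace ℝ V] [CompleteSpace V]
    [NormedAddCommGroup W] [InnerProductSpace ℝ W] [CompleteSpace W]
    [NormedAddCommGroup Z] [InnerProductSpace ℝ Z] [CompleteSpace Z]
    (A : V →L[ℝ] StrongDual ℝ W) (hA : Function.Bijective A)
    (b : StrongDual ℝ W) (u : V) (hu : A u = b)
    (L : V →L[ℝ] Z)
    (Vr : Submodule ℝ V) (Wr : Submodule ℝ W) (WkQ : Submodule ℝ W)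
    [FiniteDimensional ℝ Vr] [FiniteDimensional ℝ Wr] [FiniteDimensional ℝ WkQ]
    (ur : V) (hurm : ur ∈ Vr) (hPG : ∀ y ∈ Wr, A ur y = b y)
    (Qk : StrongDual ℝ Z →L[ℝ] W) (hmem : ∀ z' : StrongDual ℝ Z, Qk z' ∈ WkQ)
    (hmin : ∀ z' : StrongDual ℝ Z, ∀ y ∈ WkQ,
        ‖z'.comp L - A.flip (Qk z')‖ ≤ ‖z'.comp L - A.flip y‖)
    (horth : ∀ z' : StrongDual ℝ Z, ∀ y ∈ WkQ,
        (z'.comp L - A.flip (Qk z')) ((toDual ℝ V).symm (A.flip y)) = 0)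
    (st : Z) (hst : ∀ z' : StrongDual ℝ Z, z' st = z' (L ur) + (b - A ur) (Qk z'))
    (δL : ℝ)
    (hδL : δL = ⨆ z' : {z' : StrongDual ℝ Z // z' ≠ 0}, ⨅ y : WkQ,
        ‖(z'.1).comp L - A.flip (y : W)‖ / ‖z'.1‖) :
    ‖L u - st‖ ≤ δL * ⨅ y : WkQ, ‖u - ur - (toDual ℝ V).symm (A.flip (y : W))‖ := by
  set v := L u - st with hv
  set I := ⨅ y : WkQ, ‖u - ur - (toDual ℝ V).symm (A.flip (y : W))‖ with hI
  have hInn : Nonempty WkQ := ⟨0⟩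
  have hIbb : BddBelow (Set.range fun y : WkQ =>
      ‖u - ur - (toDual ℝ V).symm (A.flip (y : W))‖) :=
    ⟨0, by rintro x ⟨y, rfl⟩; exact norm_nonneg _⟩
  have hInonneg : 0 ≤ I := Real.iInf_nonneg fun y => norm_nonneg _
  have hδnonneg : 0 ≤ δL := by
    rw [hδL]
    exact Real.iSup_nonneg fun z' =>
      Real.iInf_nonneg fun y => div_nonneg (norm_nonneg _) (norm_nonneg _)
  by_cases hv0 : v = 0
  · rw [show ‖L u - st‖ = ‖v‖ from rfl, hv0, norm_zero]
    exact mul_nonneg hδnonneg hInonneg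
  · set z' : StrongDual ℝ Z := (toDual ℝ Z) v with hz'
    have hz'norm : ‖z'‖ = ‖v‖ := (toDual ℝ Z).norm_map v
    have hvpos : 0 < ‖v‖ := norm_pos_iff.mpr hv0
    have hz'pos : 0 < ‖z'‖ := by rw [hz'norm]; exact hvpos
    have hz'ne : z' ≠ 0 := by
      intro h; rw [h, norm_zero] at hz'pos; exact lt_irrefl 0 hz'pos
    set r' := z'.comp L - A.flip (Qk z') with hr'
    have key : z' v = r' (u - ur) := by
      have h1 := hst z'
      rw [← hu] at h1
      simp only [hv, hr', ContinuousLinearMap.sub_apply, ContinuousLinearMap.comp_apply,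
        ContinuousLinearMap.flip_apply, map_sub, h1]
      ring
    have hbd : ∀ y : WkQ,
        z' v ≤ ‖r'‖ * ‖u - ur - (toDual ℝ V).symm (A.flip (y : W))‖ := by
      intro y
      have horth' : r' ((toDual ℝ V).symm (A.flip (y : W))) = 0 := horth z' y y.2
      have heq : r' (u - ur - (toDual ℝ V).symm (A.flip (y : W))) = z' v := by
        rw [map_sub, horth', sub_zero, ← key]
      rw [← heq]
      have h2 := r'.le_opNorm (u - ur - (toDual ℝ V).symm (A.flip (y : W)))
      rw [Real.norm_eq_abs] at h2
      exact (le_abs_self _).trans h2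
    -- bound on operator norm of r'
    have hr'bd : ‖r'‖ ≤ δL * ‖z'‖ := by
      set f : {w : StrongDual ℝ Z // w ≠ 0} → ℝ :=
        fun w => ⨅ y : WkQ, ‖(w.1).comp L - A.flip (y : W)‖ / ‖w.1‖ with hf
      have hbb : ∀ w : {w : StrongDual ℝ Z // w ≠ 0},
          BddBelow (Set.range fun y : WkQ => ‖(w.1).comp L - A.flip (y : W)‖ / ‖w.1‖) :=
        fun w => ⟨0, by rintro x ⟨y, rfl⟩; exact div_nonneg (norm_nonneg _) (norm_nonneg _)⟩
      have hbdd : BddAbove (Set.range f) := by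
        refine ⟨‖L‖, ?_⟩
        rintro x ⟨w, rfl⟩
        have hwpos : 0 < ‖w.1‖ := norm_pos_iff.mpr w.2
        have h0 : f w ≤ ‖(w.1).comp L - A.flip ((0 : WkQ) : W)‖ / ‖w.1‖ :=
          ciInf_le (hbb w) (0 : WkQ)
        have h1 : ‖(w.1).comp L - A.flip ((0 : WkQ) : W)‖ / ‖w.1‖ ≤ ‖L‖ := by
          rw [div_le_iff₀ hwpos]
          simp only [Submodule.coe_zero, map_zero, sub_zero]
          calc ‖(w.1).comp L‖ ≤ ‖w.1‖ * ‖L‖ := ContinuousLinearMap.opNorm_comp_le _ _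
            _ = ‖L‖ * ‖w.1‖ := mul_comm _ _
        exact h0.trans h1
      have hle1 : ‖r'‖ / ‖z'‖ ≤ f ⟨z', hz'ne⟩ := by
        refine le_ciInf fun y => ?_
        exact (div_le_div_iff_of_pos_right hz'pos).mpr (hmin z' y y.2)
      have hle2 : f ⟨z', hz'ne⟩ ≤ δL := hδL ▸ le_ciSup hbdd ⟨z', hz'ne⟩
      have := hle1.trans hle2
      rwa [div_le_iff₀ hz'pos] at this
    -- main chain
    have hzv : z' v = ‖v‖ * ‖v‖ := by
      rw [hz']
      rw [toDual_apply_apply]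
      exact real_inner_self_eq_norm_mul_norm v
    have hstep : ‖v‖ * ‖v‖ ≤ ‖r'‖ * I := by
      rcases eq_or_lt_of_le (norm_nonneg r') with h0 | hpos
      · have h := hbd ⟨0, WkQ.zero_mem⟩
        rw [hzv, ← h0, zero_mul] at h
        exact h.trans (mul_nonneg (norm_nonneg _) hInonneg)
      · have h : ∀ y : WkQ, ‖v‖ * ‖v‖ / ‖r'‖ ≤
            ‖u - ur - (toDual ℝ V).symm (A.flip (y : W))‖ := by
          intro y
          rw [div_le_iff₀' hpos]
          have h2 := hbd y
          rwa [hzv] at h2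
        have h3 := le_ciInf h
        rwa [div_le_iff₀' hpos] at h3
    have hfinal : ‖v‖ * ‖v‖ ≤ δL * ‖v‖ * I := by
      calc ‖v‖ * ‖v‖ ≤ ‖r'‖ * I := hstep
        _ ≤ (δL * ‖z'‖) * I := mul_le_mul_of_nonneg_right hr'bd hInonneg
        _ = δL * ‖v‖ * I := by rw [hz'norm]
    show ‖v‖ ≤ δL * I
    have h' : ‖v‖ * ‖v‖ ≤ (δL * I) * ‖v‖ := by
      rw [show (δL * I) * ‖v‖ = δL * ‖v‖ * I from by ring]
      exact hfinal
    exact le_of_mul_le_mul_right h' hvpos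
end
end

section
/- Let W be equipped with the norm ‖y‖_W = ‖A*y‖_{V'} (equivalently R_W = A R_V⁻¹ A*). Then for any v ∈ V and the exact solution u = A⁻¹b, ‖u − v‖_V = sup_{0≠y∈W} ⟨Av − b, y⟩ / ‖y‖_W, so that min_{v∈V_r} ‖u − v‖_V = min_{v∈V_r} sup_{0≠y∈W} ⟨Av − b, y⟩/‖y‖_W. -/
noncomputable section
open InnerProductSpace
open scoped RealInnerProductSpace

lemma aux_norm_eq_iSup {V W : Type*}
    [NormedAddCommGroup V] [InnerProductSpace ℝ V] [CompleteSpace V]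
    [NormedAddCommGroup W] [InnerProductSpace ℝ W] [CompleteSpace W]
    (A : V →L[ℝ] StrongDual ℝ W) (hA : Function.Bijective A) (w : V) :
    ‖w‖ = ⨆ y : {y : W // y ≠ 0}, (A.flip y.1) w / ‖A.flip y.1‖ := by
  have hker : A.ker = ⊥ := LinearMap.ker_eq_bot (f := (A : V →ₗ[ℝ] StrongDual ℝ W)) |>.mpr hA.1
  have hrange : A.range = ⊤ := LinearMap.range_eq_top (f := (A : V →ₗ[ℝ] StrongDual ℝ W)) |>.mpr hA.2
  set e := ContinuousLinearEquiv.ofBijective A hker hrange with he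
  have heA : ∀ x : V, e x = A x := fun x => rfl
  -- flip injectivity at 0
  have hflip : ∀ y : W, y ≠ 0 → A.flip y ≠ 0 := by
    intro y hy h0
    apply hy
    have h2 : A (e.symm (innerSL ℝ y)) y = 0 := by
      have := congrArg (fun f => f (e.symm (innerSL ℝ y))) h0
      simpa using this
    have h3 : A (e.symm (innerSL ℝ y)) = innerSL ℝ y := by
      rw [← heA]; exact e.apply_symm_apply _
    rw [h3] at h2
    simpa [inner_self_eq_zero] using h2
  -- existence of representative y₀ with A.flip y₀ = innerSL ℝ w
  set h : StrongDual ℝ W →L[ℝ] ℝ := (innerSL ℝ w).comp (e.symm : StrongDual ℝ W →L[ℝ] V) with hh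
  set y₀ : W := (toDual ℝ W).symm (h.comp (toDual ℝ W).toContinuousLinearEquiv.toContinuousLinearMap) with hy₀def
  have hy₀ : A.flip y₀ = innerSL ℝ w := by
    ext x
    have key : ∀ g : StrongDual ℝ W, g y₀ = h g := by
      intro g
      have h1 : toDual ℝ W y₀ = h.comp (toDual ℝ W).toContinuousLinearEquiv.toContinuousLinearMap := by
        rw [hy₀def]; exact (toDual ℝ W).apply_symm_apply _
      set z := (toDual ℝ W).symm g with hz
      have h2 : g = toDual ℝ W z := ((toDual ℝ W).apply_symm_apply g).symm
      calc g y₀ = ⟪z, y₀⟫ := by rw [h2]; simp [toDual_apply_apply]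
        _ = ⟪y₀, z⟫ := real_inner_comm _ _
        _ = (toDual ℝ W y₀) z := by simp [toDual_apply_apply]
        _ = h (toDual ℝ W z) := by rw [h1]; rfl
        _ = h g := by rw [← h2]
    have : A x y₀ = h (A x) := key (A x)
    simp only [ContinuousLinearMap.flip_apply]
    rw [this, hh]
    simp only [ContinuousLinearMap.comp_apply, ContinuousLinearEquiv.coe_coe]
    rw [← heA, e.symm_apply_apply]
  by_cases hw : w = 0
  · subst hw
    simp only [map_zero, zero_div, norm_zero]
    by_cases hne : Nonempty {y : W // y ≠ 0}
    · exact (ciSup_const).symm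
    · haveI := not_nonempty_iff.mp hne
      rw [iSup, Set.range_eq_empty, Real.sSup_empty]
  · have hy₀ne : y₀ ≠ 0 := by
      intro h0
      apply hw
      rw [h0] at hy₀
      have : innerSL ℝ w = 0 := by rw [← hy₀]; ext x; simp
      have := congrArg (fun f => f w) this
      simpa [real_inner_self_eq_norm_sq, inner_self_eq_zero] using this
    have hbdd : BddAbove (Set.range fun y : {y : W // y ≠ 0} => (A.flip y.1) w / ‖A.flip y.1‖) := by
      refine ⟨‖w‖, ?_⟩
      rintro r ⟨y, rfl⟩
      have hpos : (0:ℝ) < ‖A.flip y.1‖ := norm_pos_iff.mpr (hflip y.1 y.2)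
      rw [div_le_iff₀ hpos]
      calc (A.flip y.1) w ≤ ‖(A.flip y.1) w‖ := le_abs_self _
        _ ≤ ‖A.flip y.1‖ * ‖w‖ := (A.flip y.1).le_opNorm w
        _ = ‖w‖ * ‖A.flip y.1‖ := mul_comm _ _
    haveI : Nonempty {y : W // y ≠ 0} := ⟨⟨y₀, hy₀ne⟩⟩
    apply le_antisymm
    · have := le_ciSup hbdd (⟨y₀, hy₀ne⟩ : {y : W // y ≠ 0})
      refine le_trans (le_of_eq ?_) this
      rw [hy₀]
      rw [innerSL_apply_norm]
      simp only [innerSL_apply_apply]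
      rw [real_inner_self_eq_norm_mul_norm]
      field_simp
    · apply ciSup_le
      intro y
      have hpos : (0:ℝ) < ‖A.flip y.1‖ := norm_pos_iff.mpr (hflip y.1 y.2)
      rw [div_le_iff₀ hpos]
      calc (A.flip y.1) w ≤ ‖(A.flip y.1) w‖ := le_abs_self _
        _ ≤ ‖A.flip y.1‖ * ‖w‖ := (A.flip y.1).le_opNorm w
        _ = ‖w‖ * ‖A.flip y.1‖ := mul_comm _ _

theorem stmt_12 {V W : Type*}
    [NormedAddCommGroup V] [InnerProductSpace ℝ V] [CompleteSpace V]
    [NormedAddCommGroup W] [InnerProductSpace ℝ W] [CompleteSpace W]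
    (A : V →L[ℝ] StrongDual ℝ W) (hA : Function.Bijective A)
    (b : StrongDual ℝ W) (u : V) (hu : A u = b)
    (Vr : Submodule ℝ V) [FiniteDimensional ℝ Vr] :
    (∀ v : V, ‖u - v‖ = ⨆ y : {y : W // y ≠ 0}, (A v - b) y.1 / ‖A.flip y.1‖) ∧
    (⨅ v : Vr, ‖u - (v : V)‖
      = ⨅ v : Vr, ⨆ y : {y : W // y ≠ 0}, (A (v : V) - b) y.1 / ‖A.flip y.1‖) := by
  have main : ∀ v : V, ‖u - v‖ = ⨆ y : {y : W // y ≠ 0}, (A v - b) y.1 / ‖A.flip y.1‖ := by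
    intro v
    have h1 : ∀ y : W, (A v - b) y = (A.flip y) (v - u) := by
      intro y
      rw [← hu]
      simp [ContinuousLinearMap.flip_apply, map_sub]
    have h2 : ‖u - v‖ = ‖v - u‖ := by rw [← neg_sub, norm_neg]
    rw [h2, aux_norm_eq_iSup A hA (v - u)]
    exact iSup_congr fun y => by rw [h1 y.1]
  exact ⟨main, iInf_congr fun v => main v⟩
end
end

section
/- Under the setting of the saddle point method (R_W = A R_V⁻¹A*, discrete inf-sup constant α_{V_r,T_p} > 0), the component u_{r,p} of the saddle point solution satisfies ‖u − u_{r,p}‖_V ≤ (1 − δ_{V_r,T_p}²)^{-1/2} · min_{v∈V_r} ‖u − v‖_V, where δ_{V_r,T_p} = max_{0≠v∈V_r} min_{y∈T_p} ‖v − R_V⁻¹A*y‖_V/‖v‖_V satisfies δ_{V_r,T_p}² = 1 − α_{V_r,T_p}² < 1. -/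
noncomputable section
open InnerProductSpace
open scoped RealInnerProductSpace
open Submodule

section aux
variable {E : Type*} [NormedAddCommGroup E] [InnerProductSpace ℝ E]

private lemma key_ineq (δ p q r : ℝ) (hδ0 : 0 ≤ δ) (hp : 0 ≤ p) (hq : 0 ≤ q) (hr : 0 ≤ r)
    (h1 : p^2 ≤ r*q) (h2 : q^2 ≤ δ^2*(p^2+q^2)) :
    (1 - δ^2)*(p^2+q^2) ≤ δ^2*(p^2+r^2) := by
  rcases eq_or_lt_of_le hq with hq0 | hq0
  · have hp0 : p = 0 := by nlinarith
    rw [hp0, ← hq0]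
    nlinarith
  · have key : (1 - δ^2)*(p^2+q^2)*q^2 ≤ δ^2*(p^2+r^2)*q^2 := by
      nlinarith [mul_nonneg (mul_nonneg (mul_nonneg hδ0 hδ0) (sub_nonneg.2 h1)) (by positivity : (0:ℝ) ≤ r*q + p^2),
                 mul_nonneg (by positivity : (0:ℝ) ≤ p^2 + q^2) (by nlinarith : (0:ℝ) ≤ δ^2*p^2 - (1-δ^2)*q^2)]
    exact le_of_mul_le_mul_right key (by positivity)

private lemma sup_aux (S : Submodule ℝ E) [HasOrthogonalProjection S] (v : E) (hv : v ≠ 0)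
    {ι : Type*} [Nonempty ι] (f : ι → E) (hf : ∀ i, f i ∈ S)
    (hsurj : ∀ s ∈ S, s ≠ 0 → ∃ i, f i = s) :
    ⨆ i, ⟪f i, v⟫_ℝ / (‖v‖ * ‖f i‖) = ‖(orthogonalProjection S v : E)‖ / ‖v‖ := by
  set P : E := (orthogonalProjection S v : E) with hP
  have hvpos : (0:ℝ) < ‖v‖ := norm_pos_iff.2 hv
  have hinner : ∀ i, ⟪f i, v⟫_ℝ = ⟪f i, P⟫_ℝ := by
    intro i
    have h0 : ⟪v - P, f i⟫_ℝ = 0 := starProjection_inner_eq_zero v (f i) (hf i)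
    have : ⟪f i, v - P⟫_ℝ = 0 := by rw [real_inner_comm]; exact h0
    rw [inner_sub_right] at this
    linarith
  have hub : ∀ i, ⟪f i, v⟫_ℝ / (‖v‖ * ‖f i‖) ≤ ‖P‖ / ‖v‖ := by
    intro i
    rcases eq_or_ne (f i) 0 with h0 | h0
    · simp [h0]
      positivity
    · have hfpos : (0:ℝ) < ‖f i‖ := norm_pos_iff.2 h0
      rw [div_le_div_iff₀ (by positivity) hvpos, hinner i]
      have := real_inner_le_norm (f i) P
      nlinarith
  have hbdd : BddAbove (Set.range fun i => ⟪f i, v⟫_ℝ / (‖v‖ * ‖f i‖)) :=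
    ⟨‖P‖ / ‖v‖, by rintro x ⟨i, rfl⟩; exact hub i⟩
  apply le_antisymm (ciSup_le hub)
  by_cases hP0 : P = 0
  · rw [hP0, norm_zero, zero_div]
    have i0 := Classical.arbitrary ι
    have : ⟪f i0, v⟫_ℝ / (‖v‖ * ‖f i0‖) = 0 := by
      rw [hinner i0, hP0, inner_zero_right, zero_div]
    rw [← this]
    exact le_ciSup hbdd i0
  · obtain ⟨i, hi⟩ := hsurj P (orthogonalProjection S v).2 hP0
    have hPpos : (0:ℝ) < ‖P‖ := norm_pos_iff.2 hP0
    have : ⟪f i, v⟫_ℝ / (‖v‖ * ‖f i‖) = ‖P‖ / ‖v‖ := by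
      rw [hinner i, hi, real_inner_self_eq_norm_sq]
      field_simp
    rw [← this]
    exact le_ciSup hbdd i

private lemma inf_aux (S : Submodule ℝ E) [HasOrthogonalProjection S] (v : E) (hv : v ≠ 0)
    {ι : Type*} [Nonempty ι] (f : ι → E) (hf : ∀ i, f i ∈ S)
    (hsurj : ∀ s ∈ S, ∃ i, f i = s) :
    ⨅ i, ‖v - f i‖ / ‖v‖ = ‖v - (orthogonalProjection S v : E)‖ / ‖v‖ := by
  set P : E := (orthogonalProjection S v : E) with hP
  have hvpos : (0:ℝ) < ‖v‖ := norm_pos_iff.2 hv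
  have hmin : ∀ i, ‖v - P‖ ≤ ‖v - f i‖ := by
    intro i
    rw [hP, ← starProjection_apply, starProjection_minimal]
    exact ciInf_le ⟨0, by rintro x ⟨w, rfl⟩; positivity⟩ (⟨f i, hf i⟩ : S)
  apply le_antisymm
  · obtain ⟨i, hi⟩ := hsurj P (orthogonalProjection S v).2
    refine (ciInf_le ⟨0, by rintro x ⟨j, rfl⟩; positivity⟩ i).trans ?_
    rw [hi]
  · exact le_ciInf fun i => by gcongr; exact hmin i

private lemma pyth_aux (S : Submodule ℝ E) [HasOrthogonalProjection S] (x : E) :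
    ‖x‖^2 = ‖(orthogonalProjection S x : E)‖^2 + ‖x - (orthogonalProjection S x : E)‖^2 := by
  have h1 := norm_sq_eq_add_norm_sq_projection x S
  have h2 : ‖orthogonalProjection Sᗮ x‖ = ‖x - (orthogonalProjection S x : E)‖ := by
    rw [← starProjection_apply, ← starProjection_orthogonal_val]
    rfl
  rw [h2] at h1
  simpa using h1

end aux

set_option maxHeartbeats 2000000 in
theorem stmt_14 {V W : Type*}
    [NormedAddCommGroup V] [InnerProductSpace ℝ V] [CompleteSpace V]
    [NormedAddCommGroup W] [InnerProductSpace ℝ W] [CompleteSpace W]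
    (A : V →L[ℝ] StrongDual ℝ W) (hA : Function.Bijective A)
    (b : StrongDual ℝ W) (u : V) (hu : A u = b)
    (Vr : Submodule ℝ V) (Tp : Submodule ℝ W)
    [FiniteDimensional ℝ Vr] [FiniteDimensional ℝ Tp]
    (α : ℝ)
    (hαdef : α = ⨅ v : {v : Vr // (v : V) ≠ 0}, ⨆ y : {y : Tp // (y : W) ≠ 0},
        A (v.1 : V) (y.1 : W) / (‖(v.1 : V)‖ * ‖A.flip (y.1 : W)‖))
    (hα : 0 < α)
    (urp : V) (hurm : urp ∈ Vr) (yrp : W) (hyrm : yrp ∈ Tp)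
    (heq1 : ∀ y ∈ Tp, A ((toDual ℝ V).symm (A.flip yrp)) y + A urp y = b y)
    (heq2 : ∀ v ∈ Vr, A.flip yrp v = 0)
    (δ : ℝ)
    (hδ : δ = ⨆ v : {v : Vr // (v : V) ≠ 0}, ⨅ y : Tp,
        ‖(v.1 : V) - (toDual ℝ V).symm (A.flip (y : W))‖ / ‖(v.1 : V)‖) :
    δ ^ 2 = 1 - α ^ 2 ∧ δ ^ 2 < 1 ∧
      ‖u - urp‖ ≤ (Real.sqrt (1 - δ ^ 2))⁻¹ * ⨅ v : Vr, ‖u - (v : V)‖ := by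
  classical
  -- the map B = R_V⁻¹ A*
  set B : W →ₗ[ℝ] V :=
    { toFun := fun y => (toDual ℝ V).symm (A.flip y)
      map_add' := by intro a b; simp
      map_smul' := by intro c a; simp } with hBdef
  have hAB : ∀ (x : V) (y : W), A x y = ⟪B y, x⟫_ℝ := by
    intro x y
    rw [hBdef]
    simp only [LinearMap.coe_mk, AddHom.coe_mk]
    rw [toDual_symm_apply]
    rfl
  have hnorm : ∀ y : W, ‖A.flip y‖ = ‖B y‖ := by
    intro y
    rw [hBdef]
    simp only [LinearMap.coe_mk, AddHom.coe_mk]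
    rw [LinearIsometryEquiv.norm_map]
  set S : Submodule ℝ V := Tp.map B with hSdef
  haveI : FiniteDimensional ℝ S := inferInstance
  -- nonemptiness
  haveI hne1 : Nonempty {v : Vr // (v : V) ≠ 0} := by
    by_contra hcon
    rw [not_nonempty_iff] at hcon
    rw [hαdef, Real.iInf_of_isEmpty] at hα
    exact lt_irrefl 0 hα
  haveI hne2 : Nonempty {y : Tp // (y : W) ≠ 0} := by
    by_contra hcon
    rw [not_nonempty_iff] at hcon
    rw [hαdef] at hα
    simp only [Real.iSup_of_isEmpty, ciInf_const] at hα
    exact lt_irrefl 0 hα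
  haveI : Nonempty Tp := ⟨0⟩
  -- g and h functions
  set g : {v : Vr // (v : V) ≠ 0} → ℝ :=
    fun v => ‖(orthogonalProjection S (v.1 : V) : V)‖ / ‖(v.1 : V)‖ with hgdef
  set h : {v : Vr // (v : V) ≠ 0} → ℝ :=
    fun v => ‖(v.1 : V) - (orthogonalProjection S (v.1 : V) : V)‖ / ‖(v.1 : V)‖ with hhdef
  have hmemS : ∀ y : W, y ∈ Tp → B y ∈ S := fun y hy => Submodule.mem_map_of_mem hy
  have hαg : α = ⨅ v, g v := by
    rw [hαdef]
    refine iInf_congr fun v => ?_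
    have : ∀ y : {y : Tp // (y : W) ≠ 0},
        A (v.1 : V) (y.1 : W) / (‖(v.1 : V)‖ * ‖A.flip (y.1 : W)‖)
          = ⟪B (y.1 : W), (v.1 : V)⟫_ℝ / (‖(v.1 : V)‖ * ‖B (y.1 : W)‖) := by
      intro y; rw [hAB, hnorm]
    rw [iSup_congr this]
    exact sup_aux S (v.1 : V) v.2 (fun y : {y : Tp // (y : W) ≠ 0} => B (y.1 : W))
      (fun y => hmemS _ y.1.2)
      (by
        rintro s hs hs0
        obtain ⟨z, hz, rfl⟩ := hs
        exact ⟨⟨⟨z, hz⟩, fun h0 => hs0 (by rw [show z = 0 from h0, map_zero])⟩, rfl⟩)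
  have hδh : δ = ⨆ v, h v := by
    rw [hδ]
    refine iSup_congr fun v => ?_
    have : ∀ y : Tp, ‖(v.1 : V) - (toDual ℝ V).symm (A.flip (y : W))‖ / ‖(v.1 : V)‖
        = ‖(v.1 : V) - B (y : W)‖ / ‖(v.1 : V)‖ := fun y => rfl
    rw [iInf_congr this]
    exact inf_aux S (v.1 : V) v.2 (fun y : Tp => B (y : W))
      (fun y => hmemS _ y.2)
      (by rintro s ⟨z, hz, rfl⟩; exact ⟨⟨z, hz⟩, rfl⟩)
  -- basic bounds on g, h
  have hg0 : ∀ v, 0 ≤ g v := fun v => by rw [hgdef]; positivity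
  have hgh : ∀ v, (g v)^2 + (h v)^2 = 1 := by
    intro v
    have hp := pyth_aux S (v.1 : V)
    have hvpos : (0:ℝ) < ‖(v.1 : V)‖ := norm_pos_iff.2 v.2
    rw [hgdef, hhdef]
    field_simp
    linarith
  have hh0 : ∀ v, 0 ≤ h v := fun v => by rw [hhdef]; positivity
  have hh1 : ∀ v, h v ≤ 1 := by
    intro v
    have := hgh v
    nlinarith [hg0 v, hh0 v]
  have hg1 : ∀ v, g v ≤ 1 := by
    intro v
    have := hgh v
    nlinarith [hg0 v, hh0 v]
  have hbddg : BddBelow (Set.range g) := ⟨0, by rintro x ⟨v, rfl⟩; exact hg0 v⟩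
  have hbddh : BddAbove (Set.range h) := ⟨1, by rintro x ⟨v, rfl⟩; exact hh1 v⟩
  have hαle : ∀ v, α ≤ g v := fun v => by rw [hαg]; exact ciInf_le hbddg v
  have hδge : ∀ v, h v ≤ δ := fun v => by rw [hδh]; exact le_ciSup hbddh v
  have v₀ : {v : Vr // (v : V) ≠ 0} := Classical.arbitrary _
  have hα1 : α ≤ 1 := (hαle v₀).trans (hg1 v₀)
  have hδ0 : 0 ≤ δ := (hh0 v₀).trans (hδge v₀)
  have h1α : (0:ℝ) ≤ 1 - α^2 := by nlinarith
  -- δ = sqrt (1 - α²)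
  have hδs : δ = Real.sqrt (1 - α^2) := by
    apply le_antisymm
    · rw [hδh]
      refine ciSup_le fun v => ?_
      rw [Real.le_sqrt (hh0 v) h1α]
      have := hgh v
      nlinarith [hαle v, hg0 v, hα.le]
    · apply le_of_forall_lt
      intro c hc
      rcases lt_or_ge c 0 with hc0 | hc0
      · exact hc0.trans_le hδ0
      · have hc2 : c^2 < 1 - α^2 := (Real.lt_sqrt hc0).1 hc
        have h1c : (0:ℝ) < 1 - c^2 := by nlinarith
        have hαlt : α < Real.sqrt (1 - c^2) := by
          rw [Real.lt_sqrt hα.le]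
          nlinarith
        rw [hαg] at hαlt
        obtain ⟨v, hv⟩ := exists_lt_of_ciInf_lt hαlt
        have hgv2 : (g v)^2 < 1 - c^2 := (Real.lt_sqrt (hg0 v)).1 hv
        have : c^2 < (h v)^2 := by nlinarith [hgh v]
        have hch : c < h v := lt_of_pow_lt_pow_left₀ 2 (hh0 v) this
        exact hch.trans_le (hδge v)
  have conj1 : δ^2 = 1 - α^2 := by rw [hδs, Real.sq_sqrt h1α]
  have conj2 : δ^2 < 1 := by nlinarith
  refine ⟨conj1, conj2, ?_⟩
  -- main estimate
  have h1δ : (0:ℝ) < 1 - δ^2 := by linarith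
  have hyw : ∀ x ∈ Vr, ⟪B yrp, x⟫_ℝ = 0 := by
    intro x hx
    have hbx : ⟪B yrp, x⟫_ℝ = A.flip yrp x := by
      rw [hBdef]; simp only [LinearMap.coe_mk, AddHom.coe_mk]; rw [toDual_symm_apply]
    rw [hbx, heq2 x hx]
  set v0 : V := (orthogonalProjection Vr u : V) with hv0
  set d : V := u - v0 with hd
  set w : V := urp - v0 with hw
  set Pd : V := (orthogonalProjection S d : V) with hPd
  set Pw : V := (orthogonalProjection S w : V) with hPw
  set p : ℝ := ‖Pw‖ with hp
  set q : ℝ := ‖w - Pw‖ with hq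
  set r : ℝ := ‖d - Pd‖ with hr
  have hwmem : w ∈ Vr := Vr.sub_mem hurm (orthogonalProjection Vr u).2
  have hdorth : ∀ x ∈ Vr, ⟪d, x⟫_ℝ = 0 := fun x hx =>
    starProjection_inner_eq_zero u x hx
  have he : u - urp = d - w := by rw [hd, hw]; abel
  have hPe : (orthogonalProjection S (d - w) : V) = B yrp := by
    apply eq_starProjection_of_mem_of_inner_eq_zero (hmemS yrp hyrm)
    rintro s ⟨z, hz, rfl⟩
    have h1 := heq1 z hz
    rw [← hu] at h1
    have e1 : A ((toDual ℝ V).symm (A.flip yrp)) z = ⟪B z, B yrp⟫_ℝ := by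
      rw [← hAB]; rfl
    rw [e1, hAB urp z, hAB u z] at h1
    rw [← he, inner_sub_left, inner_sub_left]
    have hc1 : ⟪u, B z⟫_ℝ = ⟪B z, u⟫_ℝ := real_inner_comm _ _
    have hc2 : ⟪urp, B z⟫_ℝ = ⟪B z, urp⟫_ℝ := real_inner_comm _ _
    have hc3 : ⟪B yrp, B z⟫_ℝ = ⟪B z, B yrp⟫_ℝ := real_inner_comm _ _
    linarith
  have hPsub : B yrp = Pd - Pw := by
    rw [← hPe, hPd, hPw, ← Submodule.coe_sub, ← map_sub]
  have horthw' : ∀ s ∈ S, ⟪w - Pw, s⟫_ℝ = 0 := fun s hs =>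
    starProjection_inner_eq_zero w s hs
  have horthd' : ∀ s ∈ S, ⟪d - Pd, s⟫_ℝ = 0 := fun s hs =>
    starProjection_inner_eq_zero d s hs
  have hPdmem : Pd ∈ S := (orthogonalProjection S d).2
  have hPwmem : Pw ∈ S := (orthogonalProjection S w).2
  have hwpyth : ‖w‖^2 = p^2 + q^2 := pyth_aux S w
  have hdpyth : ‖d‖^2 = ‖Pd‖^2 + r^2 := pyth_aux S d
  have hqδ : q ≤ δ * ‖w‖ := by
    rcases eq_or_ne w 0 with hw0 | hw0
    · have hPw0 : Pw = 0 := by rw [hPw, hw0]; simp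
      have hq0' : q = 0 := by rw [hq, hw0, hPw0]; simp
      rw [hq0', hw0]; simp
    · have hhv : h ⟨⟨w, hwmem⟩, hw0⟩ ≤ δ := hδge _
      have hwpos : (0:ℝ) < ‖w‖ := norm_pos_iff.2 hw0
      have hdiv : q / ‖w‖ ≤ δ := hhv
      rw [div_le_iff₀ hwpos] at hdiv
      linarith
  clear_value v0 d w Pd Pw p q r
  have hp0 : 0 ≤ p := by rw [hp]; positivity
  have hq0 : 0 ≤ q := by rw [hq]; positivity
  have hr0 : 0 ≤ r := by rw [hr]; positivity
  have hq2 : q^2 ≤ δ^2 * (p^2 + q^2) := by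
    rw [← hwpyth]
    nlinarith [norm_nonneg w]
  have hPwW : ⟪Pw, w⟫_ℝ = p^2 := by
    have h0 := horthw' Pw hPwmem
    rw [inner_sub_left] at h0
    have hc : ⟪w, Pw⟫_ℝ = ⟪Pw, w⟫_ℝ := real_inner_comm _ _
    have hn : ⟪Pw, Pw⟫_ℝ = p^2 := by rw [hp, ← real_inner_self_eq_norm_sq]
    linarith
  have hPdW : ⟪Pd, w⟫_ℝ = p^2 := by
    have h0 : ⟪B yrp, w⟫_ℝ = 0 := hyw w hwmem
    rw [hPsub, inner_sub_left] at h0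
    linarith
  have hPdPw : ⟪Pd, Pw⟫_ℝ = p^2 := by
    have h0 := horthw' Pd hPdmem
    rw [inner_sub_left] at h0
    have hc1 : ⟪w, Pd⟫_ℝ = ⟪Pd, w⟫_ℝ := real_inner_comm _ _
    have hc2 : ⟪Pw, Pd⟫_ℝ = ⟪Pd, Pw⟫_ℝ := real_inner_comm _ _
    linarith
  have hpr : p^2 + r^2 ≤ ‖d‖^2 := by
    have hcs := real_inner_le_norm Pd Pw
    rw [hPdPw, ← hp] at hcs
    rw [hdpyth]
    nlinarith [sq_nonneg (p - ‖Pd‖), norm_nonneg Pd]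
  have hprq : p^2 ≤ r * q := by
    have hdw : ⟪d, w⟫_ℝ = 0 := hdorth w hwmem
    have h1 : ⟪d - Pd, w⟫_ℝ = -(p^2) := by
      rw [inner_sub_left]; linarith
    have h2 : ⟪d - Pd, w - Pw⟫_ℝ = -(p^2) := by
      have h3 := horthd' Pw hPwmem
      rw [inner_sub_right, h3] at *
      linarith [h1]
    have hcs := real_inner_le_norm (Pd - d) (w - Pw)
    have hni : ⟪Pd - d, w - Pw⟫_ℝ = p^2 := by
      have : Pd - d = -(d - Pd) := by abel
      rw [this, inner_neg_left, h2]; ring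
    rw [hni] at hcs
    have hnr : ‖Pd - d‖ = r := by rw [hr, norm_sub_rev]
    rw [hnr, ← hq] at hcs
    exact hcs
  have hepyth : ‖u - urp‖^2 = ‖d‖^2 + ‖w‖^2 := by
    rw [he, norm_sub_sq_real, hdorth w hwmem]
    ring
  have hkey := key_ineq δ p q r hδ0 hp0 hq0 hr0 hprq hq2
  have hfinal : (1 - δ^2) * ‖u - urp‖^2 ≤ ‖d‖^2 := by
    rw [hepyth, hwpyth]
    nlinarith [sq_nonneg δ, hpr, hkey]
  have hdmin : ‖d‖ = ⨅ v : Vr, ‖u - (v : V)‖ := by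
    rw [hd, hv0]; exact starProjection_minimal u
  have hsq : ‖u - urp‖^2 ≤ ((Real.sqrt (1 - δ^2))⁻¹ * ‖d‖)^2 := by
    have hs : Real.sqrt (1 - δ^2) > 0 := Real.sqrt_pos.2 h1δ
    have heq : ((Real.sqrt (1 - δ^2))⁻¹ * ‖d‖)^2 = ‖d‖^2 / (1 - δ^2) := by
      rw [mul_pow, inv_pow, Real.sq_sqrt h1δ.le]
      ring
    rw [heq, le_div_iff₀ h1δ]
    linarith [hfinal]
  have hres := Real.sqrt_le_sqrt hsq
  rw [Real.sqrt_sq (norm_nonneg _)] at hres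
  rw [Real.sqrt_sq (by positivity)] at hres
  rw [← hdmin]
  exact hres
end
end

section
/- In the saddle point setting with R_W = A R_V⁻¹ A*, the saddle point solution (u_{r,p}, y_{r,p}) satisfies ‖u − u_{r,p} − R_V⁻¹ A* y_{r,p}‖_V ≤ ‖u − u_{r,p}‖_V. -/
noncomputable section
open InnerProductSpace
open scoped RealInnerProductSpace

theorem stmt_15 {V W : Type*}
    [NormedAddCommGroup V] [InnerProductSpace ℝ V] [CompleteSpace V]
    [NormedAddCommGroup W] [InnerProductSpace ℝ W] [CompleteSpace W]
    (A : V →L[ℝ] StrongDual ℝ W) (hA : Function.Bijective A)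
    (b : StrongDual ℝ W) (u : V) (hu : A u = b)
    (Vr : Submodule ℝ V) (Tp : Submodule ℝ W)
    [FiniteDimensional ℝ Vr] [FiniteDimensional ℝ Tp]
    (urp : V) (hurm : urp ∈ Vr) (yrp : W) (hyrm : yrp ∈ Tp)
    (heq1 : ∀ y ∈ Tp, A ((toDual ℝ V).symm (A.flip yrp)) y + A urp y = b y)
    (heq2 : ∀ v ∈ Vr, A.flip yrp v = 0) :
    ‖u - urp - (toDual ℝ V).symm (A.flip yrp)‖ ≤ ‖u - urp‖ := by
  set z := (toDual ℝ V).symm (A.flip yrp) with hzdef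
  have hz : ∀ v : V, ⟪z, v⟫_ℝ = A v yrp := by
    intro v
    have h1 : toDual ℝ V z = A.flip yrp := by
      rw [hzdef, LinearIsometryEquiv.apply_symm_apply]
    have h2 : (toDual ℝ V z) v = ⟪z, v⟫_ℝ := rfl
    rw [← h2, h1]
    rfl
  have key := heq1 yrp hyrm
  have hbu : b yrp = A u yrp := by rw [hu]
  have horth : ⟪z, u - urp - z⟫_ℝ = 0 := by
    rw [hz]
    have : A (u - urp - z) yrp = A u yrp - A urp yrp - A z yrp := by
      simp [map_sub]
    rw [this]
    rw [hbu] at key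
    linarith
  have horth' : ⟪u - urp - z, z⟫_ℝ = 0 := by
    rw [real_inner_comm]; exact horth
  have hpyth : ‖u - urp‖ ^ 2 = ‖u - urp - z‖ ^ 2 + ‖z‖ ^ 2 := by
    have : u - urp = (u - urp - z) + z := by abel
    nth_rewrite 1 [this]
    rw [norm_add_sq_real, horth']
    ring
  nlinarith [norm_nonneg (u - urp - z), norm_nonneg (u - urp), sq_nonneg ‖z‖]
end
end

section
/- In the saddle point setting with R_W = A R_V⁻¹ A*, the goal-oriented estimate s̃ = L u_{r,p} + L R_V⁻¹ A* y_{r,p} satisfies ‖s − s̃‖_Z ≤ δ^L_{T_p} · ‖u − u_{r,p} − R_V⁻¹A* y_{r,p}‖_V ≤ δ^L_{T_p}/(1 − δ_{V_r,T_p}²)^{1/2} · min_{v∈V_r}‖u − v‖_V, where δ^L_{T_p} = sup_{0≠z'∈Z'} min_{y∈T_p} ‖L*z' − A*y‖_{V'}/‖z'‖_{Z'}. -/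
noncomputable section
open InnerProductSpace
open scoped RealInnerProductSpace

set_option maxHeartbeats 1000000 in
theorem stmt_16 {V W Z : Type*}
    [NormedAddCommGroup V] [InnerProductSpace ℝ V] [CompleteSpace V]
    [NormedAddCommGroup W] [InnerProductSpace ℝ W] [CompleteSpace W]
    [NormedAddCommGroup Z] [InnerProductSpace ℝ Z] [CompleteSpace Z]
    (A : V →L[ℝ] StrongDual ℝ W) (hA : Function.Bijective A)
    (b : StrongDual ℝ W) (u : V) (hu : A u = b)
    (L : V →L[ℝ] Z)
    (Vr : Submodule ℝ V) (Tp : Submodule ℝ W)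
    [FiniteDimensional ℝ Vr] [FiniteDimensional ℝ Tp]
    (α : ℝ)
    (hαdef : α = ⨅ v : {v : Vr // (v : V) ≠ 0}, ⨆ y : {y : Tp // (y : W) ≠ 0},
        A (v.1 : V) (y.1 : W) / (‖(v.1 : V)‖ * ‖A.flip (y.1 : W)‖))
    (hα : 0 < α)
    (urp : V) (hurm : urp ∈ Vr) (yrp : W) (hyrm : yrp ∈ Tp)
    (heq1 : ∀ y ∈ Tp, A ((toDual ℝ V).symm (A.flip yrp)) y + A urp y = b y)
    (heq2 : ∀ v ∈ Vr, A.flip yrp v = 0)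
    (δ : ℝ)
    (hδ : δ = ⨆ v : {v : Vr // (v : V) ≠ 0}, ⨅ y : Tp,
        ‖(v.1 : V) - (toDual ℝ V).symm (A.flip (y : W))‖ / ‖(v.1 : V)‖)
    (δL : ℝ)
    (hδL : δL = ⨆ z' : {z' : StrongDual ℝ Z // z' ≠ 0}, ⨅ y : Tp,
        ‖(z'.1).comp L - A.flip (y : W)‖ / ‖z'.1‖) :
    ‖L u - (L urp + L ((toDual ℝ V).symm (A.flip yrp)))‖
        ≤ δL * ‖u - urp - (toDual ℝ V).symm (A.flip yrp)‖ ∧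
      δL * ‖u - urp - (toDual ℝ V).symm (A.flip yrp)‖
        ≤ δL * (Real.sqrt (1 - δ ^ 2))⁻¹ * ⨅ v : Vr, ‖u - (v : V)‖ := by
  set m : W → V := fun y => (toDual ℝ V).symm (A.flip y) with hm
  -- basic facts about m
  have hm_inner : ∀ (y : W) (v : V), ⟪m y, v⟫_ℝ = A v y := by
    intro y v
    have h1 : toDual ℝ V (m y) = A.flip y := (toDual ℝ V).apply_symm_apply _
    have h2 : (toDual ℝ V (m y)) v = ⟪m y, v⟫_ℝ := toDual_apply_apply
    rw [h1] at h2
    rw [← h2, ContinuousLinearMap.flip_apply]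
  have hm_norm : ∀ y : W, ‖m y‖ = ‖A.flip y‖ := fun y =>
    (toDual ℝ V).symm.norm_map (A.flip y)
  have hm_zero : m 0 = 0 := by simp [hm]
  have hm_smul : ∀ (t : ℝ) (y : W), m (t • y) = t • m y := by
    intro t y; simp [hm, map_smul]
  -- A.flip is injective (from surjectivity of A)
  have hAflip_ne : ∀ y : W, y ≠ 0 → A.flip y ≠ 0 := by
    intro y hy h0
    apply hy
    obtain ⟨v0, hv0⟩ := hA.2 (toDual ℝ W y)
    have h1 : ⟪y, y⟫_ℝ = 0 := by
      have h2 : A.flip y v0 = 0 := by rw [h0]; rfl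
      rw [ContinuousLinearMap.flip_apply] at h2
      rw [← toDual_apply_apply (𝕜 := ℝ) (E := W) (x := y) (y := y), ← hv0]
      exact h2
    exact inner_self_eq_zero.mp h1
  have hm_ne : ∀ y : W, y ≠ 0 → m y ≠ 0 := by
    intro y hy h0
    apply hAflip_ne y hy
    have h1 : toDual ℝ V (m y) = A.flip y := (toDual ℝ V).apply_symm_apply _
    rw [h0] at h1
    rw [← h1, map_zero]
  set e : V := m yrp with he
  set w : V := u - urp - e with hw
  -- orthogonality relations
  have hAw : ∀ y ∈ Tp, A w y = 0 := by
    intro y hy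
    have h1 := heq1 y hy
    have h2 : A w y = A u y - A urp y - A e y := by
      rw [hw]; simp [map_sub, ContinuousLinearMap.sub_apply]
    rw [h2, hu]
    have h3 : A e y = A ((toDual ℝ V).symm (A.flip yrp)) y := rfl
    rw [h3]
    linarith
  have hw_orth : ∀ y ∈ Tp, ⟪m y, w⟫_ℝ = 0 := by
    intro y hy; rw [hm_inner]; exact hAw y hy
  have he_orth : ∀ v ∈ Vr, ⟪e, v⟫_ℝ = 0 := by
    intro v hv
    rw [he, hm_inner, ← ContinuousLinearMap.flip_apply]
    exact heq2 v hv
  -- the δ family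
  set D : {v : Vr // (v : V) ≠ 0} → ℝ :=
    fun v => ⨅ y : Tp, ‖(v.1 : V) - m (y : W)‖ / ‖(v.1 : V)‖ with hD
  have hδ2 : δ = ⨆ v, D v := hδ
  have hDbddBelow : ∀ v : {v : Vr // (v : V) ≠ 0},
      BddBelow (Set.range fun y : Tp => ‖(v.1 : V) - m (y : W)‖ / ‖(v.1 : V)‖) := by
    intro v
    exact ⟨0, by rintro x ⟨y, rfl⟩; positivity⟩
  have hD_nonneg : ∀ v, 0 ≤ D v := fun v =>
    Real.iInf_nonneg (fun y => div_nonneg (norm_nonneg _) (norm_nonneg _))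
  have hD_le_one : ∀ v, D v ≤ 1 := by
    intro v
    have hv0 : (0:ℝ) < ‖(v.1 : V)‖ := norm_pos_iff.mpr v.2
    have h1 : ‖(v.1 : V) - m ((0 : Tp) : W)‖ / ‖(v.1 : V)‖ = 1 := by
      simp only [Submodule.coe_zero, hm_zero, sub_zero]
      exact div_self hv0.ne'
    calc D v ≤ ‖(v.1 : V) - m ((0 : Tp) : W)‖ / ‖(v.1 : V)‖ := ciInf_le (hDbddBelow v) 0
      _ = 1 := h1
  have hδ_bdd : BddAbove (Set.range D) := ⟨1, by rintro x ⟨v, rfl⟩; exact hD_le_one v⟩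
  have hδ_nonneg : 0 ≤ δ := hδ2 ▸ Real.iSup_nonneg hD_nonneg
  -- nonemptiness
  have hVne : Nonempty {v : Vr // (v : V) ≠ 0} := by
    by_contra h
    rw [not_nonempty_iff] at h
    rw [hαdef, Real.iInf_of_isEmpty] at hα
    exact lt_irrefl _ hα
  have hTne : Nonempty {y : Tp // (y : W) ≠ 0} := by
    by_contra h
    rw [not_nonempty_iff] at h
    rw [hαdef] at hα
    have h1 : ∀ v : {v : Vr // (v : V) ≠ 0},
        (⨆ y : {y : Tp // (y : W) ≠ 0},
          A (v.1 : V) (y.1 : W) / (‖(v.1 : V)‖ * ‖A.flip (y.1 : W)‖)) = 0 := by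
      intro v; exact Real.iSup_of_isEmpty _
    simp only [h1] at hα
    rw [ciInf_const] at hα
    exact lt_irrefl _ hα
  -- key: ⟪w, x⟫ ≤ δ * (‖w‖ * ‖x‖) for x ∈ Vr
  have hwx : ∀ x ∈ Vr, ⟪w, x⟫_ℝ ≤ δ * (‖w‖ * ‖x‖) := by
    intro x hx
    rcases eq_or_ne x (0 : V) with rfl | hx0
    · simp
    rcases eq_or_ne w (0 : V) with hw0 | hw0
    · rw [hw0]; simp
    have hxpos : (0:ℝ) < ‖x‖ := norm_pos_iff.mpr hx0
    have hwpos : (0:ℝ) < ‖w‖ := norm_pos_iff.mpr hw0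
    have hkey : ∀ y : Tp, ⟪w, x⟫_ℝ ≤ ‖w‖ * ‖x - m (y : W)‖ := by
      intro y
      have h0 : ⟪w, m (y : W)⟫_ℝ = 0 := by
        rw [real_inner_comm]; exact hw_orth _ y.2
      have h1 : ⟪w, x⟫_ℝ = ⟪w, x - m (y : W)⟫_ℝ := by
        rw [inner_sub_right, h0, sub_zero]
      rw [h1]
      exact real_inner_le_norm w _
    have h2 : ∀ y : Tp, ⟪w, x⟫_ℝ / (‖w‖ * ‖x‖) ≤ ‖x - m (y : W)‖ / ‖x‖ := by
      intro y
      rw [div_le_div_iff₀ (by positivity) hxpos]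
      have h3 := hkey y
      nlinarith [norm_nonneg (x - m (y : W))]
    have h3 : ⟪w, x⟫_ℝ / (‖w‖ * ‖x‖) ≤ D ⟨⟨x, hx⟩, hx0⟩ := le_ciInf h2
    have h4 : D ⟨⟨x, hx⟩, hx0⟩ ≤ δ := hδ2 ▸ le_ciSup hδ_bdd _
    have h5 : ⟪w, x⟫_ℝ / (‖w‖ * ‖x‖) ≤ δ := h3.trans h4
    rw [div_le_iff₀ (by positivity)] at h5
    linarith
  -- main saddle point estimate
  have hmain : ∀ v ∈ Vr, Real.sqrt (1 - δ ^ 2) * ‖w‖ ≤ ‖u - v‖ := by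
    intro v hv
    set x : V := v - urp with hx
    have hxm : x ∈ Vr := Submodule.sub_mem Vr hv hurm
    have hexp : ‖u - v‖ ^ 2
        = ‖w‖ ^ 2 - 2 * ⟪w, x⟫_ℝ + (‖e‖ ^ 2 + ‖x‖ ^ 2) := by
      have huv : u - v = w + (e - x) := by rw [hw, hx]; abel
      have hwe : ⟪w, e⟫_ℝ = 0 := by
        rw [real_inner_comm]; exact hw_orth yrp hyrm
      have hex : ⟪e, x⟫_ℝ = 0 := he_orth x hxm
      have hwex : ⟪w, e - x⟫_ℝ = -⟪w, x⟫_ℝ := by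
        rw [inner_sub_right, hwe]; ring
      have hnex : ‖e - x‖ ^ 2 = ‖e‖ ^ 2 + ‖x‖ ^ 2 := by
        rw [norm_sub_sq_real, hex]; ring
      rw [huv, norm_add_sq_real, hwex, hnex]
      ring
    have hineq : (1 - δ ^ 2) * ‖w‖ ^ 2 ≤ ‖u - v‖ ^ 2 := by
      have h1 := hwx x hxm
      have hsq : 0 ≤ δ ^ 2 * ‖w‖ ^ 2 - 2 * (δ * (‖w‖ * ‖x‖)) + ‖x‖ ^ 2 := by
        have h2 : (δ * ‖w‖ - ‖x‖) ^ 2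
            = δ ^ 2 * ‖w‖ ^ 2 - 2 * (δ * (‖w‖ * ‖x‖)) + ‖x‖ ^ 2 := by ring
        rw [← h2]; exact sq_nonneg _
      have he2 : (0:ℝ) ≤ ‖e‖ ^ 2 := sq_nonneg _
      have hgoal : (1 - δ ^ 2) * ‖w‖ ^ 2 = ‖w‖ ^ 2 - δ ^ 2 * ‖w‖ ^ 2 := by ring
      rw [hgoal, hexp]
      linarith
    rcases le_or_gt (1 - δ ^ 2) 0 with h | h
    · have hs0 : Real.sqrt (1 - δ ^ 2) = 0 := Real.sqrt_eq_zero_of_nonpos h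
      rw [hs0, zero_mul]
      exact norm_nonneg _
    · have h1 : Real.sqrt ((1 - δ ^ 2) * ‖w‖ ^ 2) ≤ Real.sqrt (‖u - v‖ ^ 2) :=
        Real.sqrt_le_sqrt hineq
      rw [Real.sqrt_mul h.le, Real.sqrt_sq (norm_nonneg w),
        Real.sqrt_sq (norm_nonneg _)] at h1
      exact h1
  -- δ² < 1
  have hsup_bdd : ∀ v : {v : Vr // (v : V) ≠ 0}, BddAbove (Set.range fun
      y : {y : Tp // (y : W) ≠ 0} =>
        A (v.1 : V) (y.1 : W) / (‖(v.1 : V)‖ * ‖A.flip (y.1 : W)‖)) := by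
    intro v
    refine ⟨1, ?_⟩
    rintro r ⟨y, rfl⟩
    dsimp only
    have hv0 : (0:ℝ) < ‖(v.1 : V)‖ := norm_pos_iff.mpr v.2
    have hs0 : (0:ℝ) < ‖m (y.1 : W)‖ := norm_pos_iff.mpr (hm_ne _ y.2)
    rw [← hm_inner, ← hm_norm]
    rw [div_le_one (by positivity)]
    calc ⟪m (y.1 : W), (v.1 : V)⟫_ℝ ≤ ‖m (y.1 : W)‖ * ‖(v.1 : V)‖ := real_inner_le_norm _ _
      _ = ‖(v.1 : V)‖ * ‖m (y.1 : W)‖ := by ring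
  have hDα : ∀ v : {v : Vr // (v : V) ≠ 0}, D v ≤ Real.sqrt (1 - α ^ 2) := by
    intro v
    have hv0 : (0:ℝ) < ‖(v.1 : V)‖ := norm_pos_iff.mpr v.2
    have hdv0 : 0 ≤ D v := hD_nonneg v
    have hdv1 : D v ≤ 1 := hD_le_one v
    -- every "cosine" is at most √(1 - (D v)²)
    have hc : ∀ y : {y : Tp // (y : W) ≠ 0},
        A (v.1 : V) (y.1 : W) / (‖(v.1 : V)‖ * ‖A.flip (y.1 : W)‖)
          ≤ Real.sqrt (1 - D v ^ 2) := by
      intro y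
      have hs0 : m (y.1 : W) ≠ 0 := hm_ne _ y.2
      have hsn : (0:ℝ) < ‖m (y.1 : W)‖ := norm_pos_iff.mpr hs0
      set s : V := m (y.1 : W) with hsdef
      set p : ℝ := ⟪s, (v.1 : V)⟫_ℝ with hp
      set t : ℝ := p / ‖s‖ ^ 2 with ht
      have hty : m ((t • y.1 : Tp) : W) = t • s := by
        rw [Submodule.coe_smul, hm_smul]
      have hkey : D v ≤ ‖(v.1 : V) - t • s‖ / ‖(v.1 : V)‖ := by
        have h1 := ciInf_le (hDbddBelow v) (t • y.1)
        rwa [hty] at h1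
      have hns : ‖(v.1 : V) - t • s‖ ^ 2 = ‖(v.1 : V)‖ ^ 2 - p ^ 2 / ‖s‖ ^ 2 := by
        rw [norm_sub_sq_real, inner_smul_right, norm_smul, real_inner_comm]
        rw [← hp, ht]
        rw [mul_pow, Real.norm_eq_abs, sq_abs]
        field_simp
        ring
      have h1 : D v ^ 2 ≤ 1 - (p / (‖(v.1 : V)‖ * ‖s‖)) ^ 2 := by
        have h2 : D v ^ 2 ≤ (‖(v.1 : V) - t • s‖ / ‖(v.1 : V)‖) ^ 2 :=
          pow_le_pow_left₀ hdv0 hkey 2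
        rw [div_pow, hns, le_div_iff₀ (by positivity : (0:ℝ) < ‖(v.1 : V)‖ ^ 2)] at h2
        rw [div_pow, mul_pow]
        have hq : p ^ 2 / (‖(v.1 : V)‖ ^ 2 * ‖s‖ ^ 2) * ‖(v.1 : V)‖ ^ 2
            = p ^ 2 / ‖s‖ ^ 2 := by
          have ha : ‖(v.1 : V)‖ ≠ 0 := hv0.ne'
          have hb : ‖s‖ ≠ 0 := hsn.ne'
          field_simp
          try ring
        nlinarith [h2, hq, sq_nonneg ‖(v.1 : V)‖, hv0, sq_nonneg p,
          mul_pos hv0 hv0]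
      have h4 : A (v.1 : V) (y.1 : W) / (‖(v.1 : V)‖ * ‖A.flip (y.1 : W)‖)
          = p / (‖(v.1 : V)‖ * ‖s‖) := by
        rw [← hm_inner, ← hm_norm]
      rw [h4]
      calc p / (‖(v.1 : V)‖ * ‖s‖) ≤ |p / (‖(v.1 : V)‖ * ‖s‖)| := le_abs_self _
        _ = Real.sqrt ((p / (‖(v.1 : V)‖ * ‖s‖)) ^ 2) := (Real.sqrt_sq_eq_abs _).symm
        _ ≤ Real.sqrt (1 - D v ^ 2) := Real.sqrt_le_sqrt (by linarith)
    have hβ : α ≤ ⨆ y : {y : Tp // (y : W) ≠ 0},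
        A (v.1 : V) (y.1 : W) / (‖(v.1 : V)‖ * ‖A.flip (y.1 : W)‖) := by
      rw [hαdef]
      apply ciInf_le _ v
      refine ⟨0, ?_⟩
      rintro r ⟨v', rfl⟩
      obtain ⟨y0⟩ := hTne
      have hy0' : ((-y0.1 : Tp) : W) ≠ 0 := by
        simpa using y0.2
      have hb := hsup_bdd v'
      have h1 := le_ciSup hb y0
      have h2 := le_ciSup hb ⟨-y0.1, hy0'⟩
      have h3 : A (v'.1 : V) ((-y0.1 : Tp) : W)
          / (‖(v'.1 : V)‖ * ‖A.flip ((-y0.1 : Tp) : W)‖)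
          = -(A (v'.1 : V) (y0.1 : W) / (‖(v'.1 : V)‖ * ‖A.flip (y0.1 : W)‖)) := by
        have hcoe : ((-y0.1 : Tp) : W) = -(y0.1 : W) := rfl
        rw [hcoe, map_neg, map_neg, norm_neg, ← neg_div]
      rw [h3] at h2
      linarith
    have h5 : α ≤ Real.sqrt (1 - D v ^ 2) := hβ.trans (ciSup_le hc)
    have h6 : (0:ℝ) ≤ 1 - D v ^ 2 := by nlinarith
    have h7 : α ^ 2 ≤ 1 - D v ^ 2 := by
      have := pow_le_pow_left₀ hα.le h5 2
      rwa [Real.sq_sqrt h6] at this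
    rw [Real.le_sqrt hdv0 (by nlinarith)]
    linarith
  have hδle : δ ≤ Real.sqrt (1 - α ^ 2) := hδ2 ▸ ciSup_le hDα
  have hδlt1 : δ < 1 := by
    apply lt_of_le_of_lt hδle
    rw [Real.sqrt_lt' one_pos]
    nlinarith
  have h1δ : (0:ℝ) < 1 - δ ^ 2 := by nlinarith
  have hs : (0:ℝ) < Real.sqrt (1 - δ ^ 2) := Real.sqrt_pos.mpr h1δ
  -- δL ≥ 0
  have hδL0 : 0 ≤ δL := hδL ▸ Real.iSup_nonneg (fun z' =>
    Real.iInf_nonneg (fun y => div_nonneg (norm_nonneg _) (norm_nonneg _)))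
  constructor
  · -- first inequality
    have hw_eq : L u - (L urp + L ((toDual ℝ V).symm (A.flip yrp))) = L w := by
      rw [hw, he]
      simp only [map_sub]
      abel
    rw [hw_eq]
    rcases eq_or_ne (L w) 0 with h | h
    · rw [h, norm_zero]; positivity
    obtain ⟨g, hg1, hg2⟩ := exists_dual_vector ℝ (L w) (norm_ne_zero_iff.mpr h)
    have hw0 : w ≠ 0 := by
      intro h0; exact h (by rw [h0, map_zero])
    have hwpos : (0:ℝ) < ‖w‖ := norm_pos_iff.mpr hw0
    have hg0 : g ≠ 0 := by
      intro h0; rw [h0] at hg1; simp at hg1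
    have hkey : ∀ y : Tp, ‖L w‖ ≤ ‖g.comp L - A.flip (y : W)‖ * ‖w‖ := by
      intro y
      have h3 : (g.comp L - A.flip (y : W)) w = ‖L w‖ := by
        rw [ContinuousLinearMap.sub_apply, ContinuousLinearMap.comp_apply]
        rw [ContinuousLinearMap.flip_apply, hAw _ y.2, hg2]
        simp
      calc ‖L w‖ = (g.comp L - A.flip (y : W)) w := h3.symm
        _ ≤ ‖(g.comp L - A.flip (y : W)) w‖ := le_abs_self _
        _ ≤ ‖g.comp L - A.flip (y : W)‖ * ‖w‖ :=
            ContinuousLinearMap.le_opNorm _ w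
    have hbddL : BddAbove (Set.range fun z' : {z' : StrongDual ℝ Z // z' ≠ 0} =>
        ⨅ y : Tp, ‖(z'.1).comp L - A.flip (y : W)‖ / ‖z'.1‖) := by
      refine ⟨‖L‖, ?_⟩
      rintro r ⟨z', rfl⟩
      have hz : (0:ℝ) < ‖z'.1‖ := norm_pos_iff.mpr z'.2
      have h1 : (⨅ y : Tp, ‖(z'.1).comp L - A.flip (y : W)‖ / ‖z'.1‖)
          ≤ ‖(z'.1).comp L - A.flip ((0 : Tp) : W)‖ / ‖z'.1‖ :=
        ciInf_le ⟨0, by rintro x ⟨y, rfl⟩; positivity⟩ 0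
      have h2 : ‖(z'.1).comp L - A.flip ((0 : Tp) : W)‖ / ‖z'.1‖ ≤ ‖L‖ := by
        rw [div_le_iff₀ hz]
        simp only [Submodule.coe_zero, map_zero, sub_zero]
        calc ‖(z'.1).comp L‖ ≤ ‖z'.1‖ * ‖L‖ := ContinuousLinearMap.opNorm_comp_le _ _
          _ = ‖L‖ * ‖z'.1‖ := by ring
      exact h1.trans h2
    have h4 : ‖L w‖ / ‖w‖ ≤ ⨅ y : Tp, ‖g.comp L - A.flip (y : W)‖ / ‖g‖ := by
      apply le_ciInf
      intro y
      rw [hg1, div_one, div_le_iff₀ hwpos]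
      exact hkey y
    have h5 : (⨅ y : Tp, ‖g.comp L - A.flip (y : W)‖ / ‖g‖) ≤ δL :=
      hδL ▸ le_ciSup hbddL ⟨g, hg0⟩
    have h6 : ‖L w‖ / ‖w‖ ≤ δL := h4.trans h5
    rw [div_le_iff₀ hwpos] at h6
    linarith
  · -- second inequality
    have hinf : Real.sqrt (1 - δ ^ 2) * ‖w‖ ≤ ⨅ v : Vr, ‖u - (v : V)‖ :=
      le_ciInf (fun v => hmain v v.2)
    have h7 : ‖w‖ ≤ (Real.sqrt (1 - δ ^ 2))⁻¹ * ⨅ v : Vr, ‖u - (v : V)‖ := by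
      have h8 : ‖w‖ * Real.sqrt (1 - δ ^ 2) ≤ ⨅ v : Vr, ‖u - (v : V)‖ := by
        rw [mul_comm]; exact hinf
      have h9 := (le_div_iff₀ hs).mpr h8
      rwa [div_eq_inv_mul] at h9
    calc δL * ‖w‖ ≤ δL * ((Real.sqrt (1 - δ ^ 2))⁻¹ * ⨅ v : Vr, ‖u - (v : V)‖) :=
          mul_le_mul_of_nonneg_left h7 hδL0
      _ = δL * (Real.sqrt (1 - δ ^ 2))⁻¹ * ⨅ v : Vr, ‖u - (v : V)‖ := by ring
end
end

section
/- In the saddle point setting with R_W = A R_V⁻¹A*: if the test space T_p satisfies R_W⁻¹ A V_r ⊆ T_p (equivalently V_r ⊆ R_V⁻¹ A* T_p), then δ_{V_r,T_p} = 0 and the saddle point solution u_{r,p} coincides with the orthogonal projection of u onto V_r. -/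
noncomputable section
open InnerProductSpace
open scoped RealInnerProductSpace

theorem stmt_17 {V W : Type*}
    [NormedAddCommGroup V] [InnerProductSpace ℝ V] [CompleteSpace V]
    [NormedAddCommGroup W] [InnerProductSpace ℝ W] [CompleteSpace W]
    (A : V →L[ℝ] StrongDual ℝ W) (hA : Function.Bijective A)
    (b : StrongDual ℝ W) (u : V) (hu : A u = b)
    (Vr : Submodule ℝ V) (Tp : Submodule ℝ W)
    [FiniteDimensional ℝ Vr] [FiniteDimensional ℝ Tp]
    (hT : ∀ v ∈ Vr, ∃ y ∈ Tp, (toDual ℝ V).symm (A.flip y) = v)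
    (urp : V) (hurm : urp ∈ Vr) (yrp : W) (hyrm : yrp ∈ Tp)
    (heq1 : ∀ y ∈ Tp, A ((toDual ℝ V).symm (A.flip yrp)) y + A urp y = b y)
    (heq2 : ∀ v ∈ Vr, A.flip yrp v = 0)
    (δ : ℝ)
    (hδ : δ = ⨆ v : {v : Vr // (v : V) ≠ 0}, ⨅ y : Tp,
        ‖(v.1 : V) - (toDual ℝ V).symm (A.flip (y : W))‖ / ‖(v.1 : V)‖) :
    δ = 0 ∧ urp = (Vr.orthogonalProjectionOnto u : V) := by
  have hdual : ∀ (f : StrongDual ℝ V) (w : V),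
      ⟪(toDual ℝ V).symm f, w⟫ = f w := fun f w => toDual_symm_apply
  constructor
  · rw [hδ]
    have hzero : ∀ v : {v : Vr // (v : V) ≠ 0},
        (⨅ y : Tp, ‖(v.1 : V) - (toDual ℝ V).symm (A.flip (y : W))‖ / ‖(v.1 : V)‖) = 0 := by
      intro v
      obtain ⟨y, hy, hyeq⟩ := hT v.1 v.1.2
      apply le_antisymm
      · have hle := ciInf_le (f := fun y : Tp =>
            ‖(v.1 : V) - (toDual ℝ V).symm (A.flip (y : W))‖ / ‖(v.1 : V)‖)
          ⟨0, by rintro x ⟨i, rfl⟩; exact div_nonneg (norm_nonneg _) (norm_nonneg _)⟩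
          (⟨y, hy⟩ : Tp)
        simpa [hyeq] using hle
      · exact le_ciInf fun y => div_nonneg (norm_nonneg _) (norm_nonneg _)
    by_cases h : Nonempty {v : Vr // (v : V) ≠ 0}
    · simp only [hzero]
      exact ciSup_const
    · rw [not_nonempty_iff] at h
      exact Real.iSup_of_isEmpty _
  · symm
    rw [← Submodule.starProjection_apply]
    apply Submodule.eq_starProjection_of_mem_of_inner_eq_zero hurm
    intro w hw
    obtain ⟨y, hy, hyeq⟩ := hT w hw
    have h1 : A (u - urp) y = A ((toDual ℝ V).symm (A.flip yrp)) y := by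
      have := heq1 y hy
      rw [← hu] at this
      simp only [map_sub, ContinuousLinearMap.sub_apply]
      linarith
    have h2 : A ((toDual ℝ V).symm (A.flip yrp)) y = 0 := by
      have : A ((toDual ℝ V).symm (A.flip yrp)) y
          = ⟪(toDual ℝ V).symm (A.flip y), (toDual ℝ V).symm (A.flip yrp)⟫ := by
        rw [hdual]; rfl
      rw [this, hyeq, real_inner_comm, hdual]
      exact heq2 w hw
    have h3 : ⟪u - urp, w⟫ = A (u - urp) y := by
      rw [real_inner_comm, ← hyeq, hdual]; rfl
    rw [h3, h1, h2]
end
end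

section
/- Let A ∈ L(V,V') be symmetric coercive with R_V = R_W = A, let V_r ⊆ T_p be finite-dimensional subspaces of V. Then the saddle point solution (u_{r,p}, y_{r,p}) satisfies: y_{r,p} ∈ T_p ∩ V_r^⊥ (orthogonality in the energy inner product), t_{r,p} := u_{r,p} + y_{r,p} is the energy-orthogonal projection of u onto T_p, u_{r,p} is the energy-orthogonal projection of u onto V_r, and y_{r,p} is the energy-orthogonal projection of u onto T_p ∩ V_r^⊥. -/
noncomputable section
open InnerProductSpace
open scoped RealInnerProductSpace

theorem stmt_18 {V : Type*}
    [NormedAddCommGroup V] [InnerProductSpace ℝ V] [CompleteSpace V]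
    (A : V →L[ℝ] StrongDual ℝ V)
    (hsym : ∀ v w : V, A v w = A w v)
    (hcoer : ∃ c > 0, ∀ v : V, c * ‖v‖ ^ 2 ≤ A v v)
    (hRV : ∀ v w : V, ⟪v, w⟫_ℝ = A v w)
    (b : StrongDual ℝ V) (u : V) (hu : A u = b)
    (Vr Tp : Submodule ℝ V) [FiniteDimensional ℝ Vr] [FiniteDimensional ℝ Tp]
    (hVT : Vr ≤ Tp)
    [CompleteSpace (Tp ⊓ Vrᗮ : Submodule ℝ V)]
    (urp yrp : V) (hurm : urp ∈ Vr) (hyrm : yrp ∈ Tp)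
    (heq1 : ∀ y ∈ Tp, A yrp y + A urp y = b y)
    (heq2 : ∀ v ∈ Vr, A yrp v = 0) :
    (∀ v ∈ Vr, ⟪yrp, v⟫_ℝ = 0) ∧
    yrp ∈ Tp ⊓ Vrᗮ ∧
    (Submodule.orthogonalProjectionOnto Tp u : V) = urp + yrp ∧
    (Submodule.orthogonalProjectionOnto Vr u : V) = urp ∧
    (Submodule.orthogonalProjectionOnto (Tp ⊓ Vrᗮ) u : V) = yrp := by
  have h1 : ∀ v ∈ Vr, ⟪yrp, v⟫_ℝ = 0 := fun v hv => by rw [hRV]; exact heq2 v hv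
  have hmem : yrp ∈ Tp ⊓ Vrᗮ := by
    refine ⟨hyrm, (Submodule.mem_orthogonal' _ _).mpr h1⟩
  refine ⟨h1, hmem, ?_, ?_, ?_⟩
  · apply Submodule.eq_starProjection_of_mem_of_inner_eq_zero
      (Submodule.add_mem _ (hVT hurm) hyrm)
    intro w hw
    rw [sub_add_eq_sub_sub, inner_sub_left, inner_sub_left, hRV, hRV, hRV, hu]
    have := heq1 w hw
    ring_nf
    linarith
  · apply Submodule.eq_starProjection_of_mem_of_inner_eq_zero hurm
    intro w hw
    rw [inner_sub_left, hRV, hRV, hu]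
    have h2 := heq1 w (hVT hw)
    have h3 := heq2 w hw
    linarith
  · apply Submodule.eq_starProjection_of_mem_of_inner_eq_zero hmem
    intro w hw
    rw [inner_sub_left, hRV, hRV, hu]
    have h2 := heq1 w hw.1
    have h3 : ⟪urp, w⟫_ℝ = 0 := hw.2 urp hurm
    rw [hRV] at h3
    linarith
end
end

section
/- Let A ∈ L(V,V') be symmetric and coercive, ‖·‖_V the energy norm (‖v‖_V² = ⟨Av,v⟩), and ‖·‖_{V₀} another Hilbert norm on V such that α ‖v‖_{V₀} ≤ ‖Av‖_{V₀'} for all v ∈ V with α > 0. Then for every v ∈ V, ‖v‖_V ≤ α^{-1/2} ‖Av‖_{V₀'}. In particular, for u = A⁻¹b and any ũ ∈ V, ‖u − ũ‖_V ≤ α^{-1/2} ‖A ũ − b‖_{V₀'}. -/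
noncomputable section
open InnerProductSpace
open scoped RealInnerProductSpace

theorem stmt_19 {V : Type*}
    [NormedAddCommGroup V] [InnerProductSpace ℝ V] [CompleteSpace V] {E : Type*}
    [NormedAddCommGroup E] [InnerProductSpace ℝ E] [CompleteSpace E]
    (A : V →L[ℝ] StrongDual ℝ V)
    (hsym : ∀ v w : V, A v w = A w v)
    (hcoer : ∃ c > 0, ∀ v : V, c * ‖v‖ ^ 2 ≤ A v v)
    (hRV : ∀ v w : V, ⟪v, w⟫_ℝ = A v w)
    (J : E ≃L[ℝ] V)
    (α : ℝ) (hα : 0 < α)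
    (hbound : ∀ v : V, α * ‖J.symm v‖ ≤ ‖(A v).comp (J : E →L[ℝ] V)‖) :
    (∀ v : V, ‖v‖ ≤ (Real.sqrt α)⁻¹ * ‖(A v).comp (J : E →L[ℝ] V)‖) ∧
    ∀ (b : StrongDual ℝ V) (u ut : V), A u = b →
      ‖u - ut‖ ≤ (Real.sqrt α)⁻¹ * ‖(A ut - b).comp (J : E →L[ℝ] V)‖ := by
  have key : ∀ v : V, ‖v‖ ≤ (Real.sqrt α)⁻¹ * ‖(A v).comp (J : E →L[ℝ] V)‖ := by
    intro v
    set c := (A v).comp (J : E →L[ℝ] V) with hc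
    have hcnn : (0:ℝ) ≤ ‖c‖ := norm_nonneg _
    have h1 : ‖v‖ ^ 2 = A v v := by
      rw [← hRV v v, real_inner_self_eq_norm_sq]
    have h2 : A v v = c (J.symm v) := by
      simp [hc]
    have h3 : c (J.symm v) ≤ ‖c‖ * ‖J.symm v‖ :=
      le_trans (le_abs_self _) (c.le_opNorm _)
    have h4 : ‖J.symm v‖ ≤ α⁻¹ * ‖c‖ := by
      rw [le_inv_mul_iff₀ hα]
      exact hbound v
    have h5 : ‖v‖ ^ 2 ≤ α⁻¹ * ‖c‖ ^ 2 := by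
      calc ‖v‖ ^ 2 = c (J.symm v) := by rw [h1, h2]
        _ ≤ ‖c‖ * ‖J.symm v‖ := h3
        _ ≤ ‖c‖ * (α⁻¹ * ‖c‖) := by
            exact mul_le_mul_of_nonneg_left h4 hcnn
        _ = α⁻¹ * ‖c‖ ^ 2 := by ring
    have := Real.sqrt_le_sqrt h5
    rwa [Real.sqrt_sq (norm_nonneg v), Real.sqrt_mul (by positivity),
      Real.sqrt_sq hcnn, Real.sqrt_inv] at this
  refine ⟨key, fun b u ut hu => ?_⟩
  have : A (u - ut) = -(A ut - b) := by
    rw [← hu]; simp [map_sub]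
  calc ‖u - ut‖ ≤ (Real.sqrt α)⁻¹ * ‖(A (u - ut)).comp (J : E →L[ℝ] V)‖ := key _
    _ = (Real.sqrt α)⁻¹ * ‖(A ut - b).comp (J : E →L[ℝ] V)‖ := by
        rw [this]
        congr 1
        rw [show (-(A ut - b)).comp (J : E →L[ℝ] V) = -((A ut - b).comp (J : E →L[ℝ] V)) from rfl,
          norm_neg]
end
end
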